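/- arXiv:2307.07430 — 5 statements merged into one kernel-verified Lean document; each statement's English description precedes it below -/
import Mathlib

section
/- For a permutation σ of Fin n, the trace of the induced linear map on the k-th exterior power Λ^k(ℚ^n) equals the sum over all k-element subsets S of Fin n that are setwise invariant under σ of the sign of the restriction of σ to S. -/
/-- The permutation matrix of `σ`, with `(P_σ)_{i,j} = 1` if `i = σ j` and `0` otherwise. -/
def permMat (n : ℕ) (σ : Equiv.Perm (Fin n)) : Matrix (Fin n) (Fin n) ℚ :=
  Matrix.of fun i j => if i = σ j then 1 else 0

open ExteriorAlgebra in
/-- The endomorphism of the `k`-th exterior power induced by an endomorphism of `M`. -/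
noncomputable def extPowMap (R : Type*) [CommRing R] {M : Type*} [AddCommGroup M] [Module R M]
    (k : ℕ) (f : M →ₗ[R] M) : (⋀[R]^k M) →ₗ[R] (⋀[R]^k M) :=
  (ExteriorAlgebra.map f).toLinearMap.restrict (p := ⋀[R]^k M) (q := ⋀[R]^k M) <| by
    intro x hx
    rw [← ιMulti_span_fixedDegree] at hx ⊢
    induction hx using Submodule.span_induction with
    | mem x h =>
        obtain ⟨m, rfl⟩ := h
        rw [AlgHom.toLinearMap_apply, map_apply_ιMulti]
        exact Submodule.subset_span ⟨f ∘ m, rfl⟩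
    | zero => simp
    | add x y _ _ hx hy => rw [map_add]; exact Submodule.add_mem _ hx hy
    | smul r x _ hx => rw [map_smul]; exact Submodule.smul_mem _ r hx

open ExteriorAlgebra Finset

namespace TrExt

variable {n k : ℕ}

/-- standard basis vector -/
noncomputable abbrev e (j : Fin n) : Fin n → ℚ := Pi.basisFun ℚ (Fin n) j

/-- family of wedges of standard basis vectors -/
noncomputable def fam (n k : ℕ) (S : {s : Finset (Fin n) // s.card = k}) :
    ExteriorAlgebra ℚ (Fin n → ℚ) :=
  ιMulti ℚ k fun i => e (S.1.orderIsoOfFin S.2 i)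

/-- dual alternating map: determinant of coordinates in positions of `S` -/
noncomputable def dualA (S : Finset (Fin n)) (hS : S.card = k) :
    (Fin n → ℚ) [⋀^Fin k]→ₗ[ℚ] ℚ :=
  Matrix.detRowAlternating.compLinearMap
    (LinearMap.funLeft ℚ ℚ (fun i => (S.orderIsoOfFin hS i : Fin n)))

/-- dual functional on the exterior algebra -/
noncomputable def dualF (S : Finset (Fin n)) (hS : S.card = k) :
    ExteriorAlgebra ℚ (Fin n → ℚ) →ₗ[ℚ] ℚ :=
  liftAlternating (Function.update 0 k (dualA S hS))

lemma dualF_ιMulti (S : Finset (Fin n)) (hS : S.card = k) (v : Fin k → (Fin n → ℚ)) :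
    dualF S hS (ιMulti ℚ k v) = Matrix.det (Matrix.of fun j i =>
      v j (S.orderIsoOfFin hS i)) := by
  rw [dualF, liftAlternating_apply_ιMulti, Function.update_self]
  rfl

lemma dualF_fam (S : Finset (Fin n)) (hS : S.card = k)
    (T : {s : Finset (Fin n) // s.card = k}) :
    dualF S hS (fam n k T) = if T.1 = S then 1 else 0 := by
  rw [fam, dualF_ιMulti]
  split_ifs with h
  · subst h
    have : (Matrix.of fun j i => e ((T.1.orderIsoOfFin hS j : Fin n)) ((T.1.orderIsoOfFin hS i : Fin n)) :
        Matrix (Fin k) (Fin k) ℚ) = 1 := by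
      ext j i
      simp only [Matrix.of_apply, Pi.basisFun_apply, Matrix.one_apply, Pi.single_apply]
      by_cases hji : i = j
      · simp [hji]
      · have hne : (T.1.orderIsoOfFin hS i : Fin n) ≠ T.1.orderIsoOfFin hS j := by
          simp [Subtype.coe_inj, hji]
        simp only [if_neg hne, if_neg (Ne.symm hji)]
    rw [this, Matrix.det_one]
  · -- exists x ∈ T \ S
    have : ∃ x ∈ T.1, x ∉ S := by
      by_contra hc
      push_neg at hc
      exact h (Finset.eq_of_subset_of_card_le hc (by rw [hS, T.2]))
    obtain ⟨x, hxT, hxS⟩ := this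
    obtain ⟨j, hj⟩ : ∃ j, (T.1.orderIsoOfFin T.2 j : Fin n) = x := by
      obtain ⟨j, hj⟩ := (T.1.orderIsoOfFin T.2).surjective ⟨x, hxT⟩
      exact ⟨j, by rw [hj]⟩
    apply Matrix.det_eq_zero_of_row_eq_zero j
    intro i
    simp only [Matrix.of_apply, Pi.basisFun_apply, Pi.single_apply]
    have : (S.orderIsoOfFin hS i : Fin n) ≠ T.1.orderIsoOfFin T.2 j := by
      rw [hj]; exact fun hc => hxS (hc ▸ (S.orderIsoOfFin hS i).2)
    exact if_neg this

end TrExt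

namespace TrExt2
open TrExt

variable {n k : ℕ}

lemma wedge_e_mem (r : Fin k → Fin n) :
    ιMulti ℚ k (fun i => e (r i)) ∈ Submodule.span ℚ (Set.range (fam n k)) := by
  by_cases hr : Function.Injective r
  · set T : Finset (Fin n) := Finset.image r Finset.univ with hTdef
    have hT : T.card = k := by
      rw [hTdef, Finset.card_image_of_injective _ hr, Finset.card_univ, Fintype.card_fin]
    let g : Fin k → Fin k := fun i =>
      (T.orderIsoOfFin hT).symm ⟨r i, Finset.mem_image_of_mem r (Finset.mem_univ i)⟩
    have hg : Function.Injective g := by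
      intro a b hab
      apply hr
      have h1 : ((T.orderIsoOfFin hT) (g a) : Fin n) = (T.orderIsoOfFin hT) (g b) := by rw [hab]
      simpa [g, OrderIso.apply_symm_apply] using h1
    let τ : Equiv.Perm (Fin k) := Equiv.ofBijective g (Finite.injective_iff_bijective.mp hg)
    have key : (fun i => e (r i)) = (fun i => e ((T.orderIsoOfFin hT i : Fin n))) ∘ τ := by
      funext i
      simp only [Function.comp_apply]
      have hri : r i = ((T.orderIsoOfFin hT (τ i) : Fin n)) := by
        show r i = ((T.orderIsoOfFin hT (g i) : Fin n))
        simp [g]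
      rw [hri]
    rw [key, AlternatingMap.map_perm]
    exact Submodule.smul_mem _ _ (Submodule.subset_span ⟨⟨T, hT⟩, rfl⟩)
  · simp only [Function.Injective] at hr
    push_neg at hr
    obtain ⟨i, j, hij, hne⟩ := hr
    have h0 : (ιMulti ℚ k (M := Fin n → ℚ)) (fun i => e (r i)) = 0 :=
      AlternatingMap.map_eq_zero_of_eq _ _ (show e (r i) = e (r j) by rw [hij]) hne
    rw [h0]
    exact Submodule.zero_mem _

lemma mem_span_fam (m : Fin k → (Fin n → ℚ)) :
    ιMulti ℚ k m ∈ Submodule.span ℚ (Set.range (fam n k)) := by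
  have hm : (fun i => ∑ j, m i j • e j) = m := by
    funext i x
    simp [e, Pi.single_apply]
  have expand := MultilinearMap.map_sum
    (ιMulti ℚ k (M := Fin n → ℚ)).toMultilinearMap (fun i j => m i j • e j)
  rw [← hm]
  show (ιMulti ℚ k (M := Fin n → ℚ)).toMultilinearMap (fun i => ∑ j, m i j • e j) ∈ _
  rw [expand]
  apply Submodule.sum_mem
  intro r _
  rw [MultilinearMap.map_smul_univ]
  exact Submodule.smul_mem _ _ (wedge_e_mem r)

lemma fam_mem (S : {s : Finset (Fin n) // s.card = k}) :
    fam n k S ∈ ⋀[ℚ]^k (Fin n → ℚ) :=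
  ιMulti_range ℚ k ⟨_, rfl⟩

lemma fam_li : LinearIndependent ℚ (fam n k) := by
  rw [Fintype.linearIndependent_iff]
  intro g hg S
  have h2 := congrArg (dualF S.1 S.2) hg
  rw [map_sum, map_zero] at h2
  simp only [map_smul, dualF_fam, smul_eq_mul, mul_ite, mul_one, mul_zero] at h2
  simp only [Subtype.coe_inj] at h2
  rwa [Finset.sum_ite_eq' Finset.univ S g, if_pos (Finset.mem_univ S)] at h2

lemma span_fam_eq : Submodule.span ℚ (Set.range (fam n k)) = ⋀[ℚ]^k (Fin n → ℚ) := by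
  refine le_antisymm (Submodule.span_le.2 ?_) ?_
  · rintro x ⟨S, rfl⟩; exact fam_mem S
  · rw [← ιMulti_span_fixedDegree, Submodule.span_le]
    rintro x ⟨m, rfl⟩
    exact mem_span_fam m

/-- the basis of the k-th exterior power indexed by k-subsets -/
noncomputable def bas (n k : ℕ) :
    Module.Basis {s : Finset (Fin n) // s.card = k} ℚ (⋀[ℚ]^k (Fin n → ℚ)) := by
  refine Module.Basis.mk (v := fun S => ⟨fam n k S, fam_mem S⟩) ?_ ?_
  · apply LinearIndependent.of_comp (⋀[ℚ]^k (Fin n → ℚ)).subtype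
    exact fam_li
  · rw [← Submodule.map_le_map_iff_of_injective
      (Submodule.injective_subtype (⋀[ℚ]^k (Fin n → ℚ)))]
    rw [Submodule.map_span, Submodule.map_subtype_top]
    rw [← Set.range_comp]
    have : (⋀[ℚ]^k (Fin n → ℚ)).subtype ∘ (fun S => (⟨fam n k S, fam_mem S⟩ :
        ⋀[ℚ]^k (Fin n → ℚ))) = fam n k := rfl
    rw [this, span_fam_eq]

lemma coord_eq (S : {s : Finset (Fin n) // s.card = k}) :
    (bas n k).coord S = (dualF S.1 S.2) ∘ₗ (⋀[ℚ]^k (Fin n → ℚ)).subtype := by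
  apply Module.Basis.ext (bas n k)
  intro T
  have hb : bas n k T = ⟨fam n k T, fam_mem T⟩ := Module.Basis.mk_apply _ _ _
  rw [Module.Basis.coord_apply, Module.Basis.repr_self, LinearMap.comp_apply]
  have h2 : ((⋀[ℚ]^k (Fin n → ℚ)).subtype ((bas n k) T)) = fam n k T := by
    rw [hb]; rfl
  rw [h2, dualF_fam, Finsupp.single_apply]
  by_cases h : T = S
  · simp [h]
  · rw [if_neg h, if_neg (fun hc => h (Subtype.ext hc))]


lemma permMat_apply_e (σ : Equiv.Perm (Fin n)) (j : Fin n) :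
    Matrix.toLin' (permMat n σ) (e j) = e (σ j) := by
  funext x
  simp [Matrix.toLin'_apply, permMat, Matrix.mulVec, dotProduct, e, Pi.single_apply,
    mul_ite, eq_comm]

lemma diag (σ : Equiv.Perm (Fin n)) (S : {s : Finset (Fin n) // s.card = k}) :
    dualF S.1 S.2 (ExteriorAlgebra.map (Matrix.toLin' (permMat n σ)) (fam n k S)) =
      if h : ∀ x, x ∈ S.1 ↔ σ x ∈ S.1 then
        ((Equiv.Perm.sign (σ.subtypePerm (p := fun x => x ∈ S.1) (fun x => (h x).symm)) : ℤ) : ℚ) else 0 := by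
  rw [fam, map_apply_ιMulti, dualF_ιMulti]
  have hc : ∀ j i, ((Matrix.toLin' (permMat n σ) ∘ fun i => e ((S.1.orderIsoOfFin S.2 i : Fin n)))
      j) ((S.1.orderIsoOfFin S.2 i : Fin n)) =
      if ((S.1.orderIsoOfFin S.2 i : Fin n)) = σ ((S.1.orderIsoOfFin S.2 j : Fin n))
        then 1 else 0 := by
    intro j i
    simp only [Function.comp_apply, permMat_apply_e]
    simp [e, Pi.single_apply]
    congr 1
  by_cases hinv : ∀ x, x ∈ S.1 ↔ σ x ∈ S.1
  · rw [dif_pos hinv]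
    set eS := (S.1.orderIsoOfFin S.2).toEquiv with heS
    set π := σ.subtypePerm (p := fun x => x ∈ S.1) (fun x => (hinv x).symm) with hπ
    set ρ := eS.symm.permCongr π with hρ
    have hs : ∀ x : Fin k, ((S.1.orderIsoOfFin S.2 (ρ x) : Fin n)) =
        σ ((S.1.orderIsoOfFin S.2 x : Fin n)) := by
      intro x
      have : ρ x = eS.symm (π (eS x)) := rfl
      rw [this]
      have h1 : eS (eS.symm (π (eS x))) = π (eS x) := eS.apply_symm_apply _
      calc ((S.1.orderIsoOfFin S.2 (eS.symm (π (eS x))) : Fin n))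
          = ((eS (eS.symm (π (eS x))) : Fin n)) := rfl
        _ = ((π (eS x) : Fin n)) := by rw [h1]
        _ = σ ((S.1.orderIsoOfFin S.2 x : Fin n)) := rfl
    have hmat : (Matrix.of fun j i =>
        ((Matrix.toLin' (permMat n σ) ∘ fun i => e ((S.1.orderIsoOfFin S.2 i : Fin n))) j)
          ((S.1.orderIsoOfFin S.2 i : Fin n))) = ρ.permMatrix ℚ := by
      ext j i
      rw [Matrix.of_apply, hc j i, ← hs j]
      have hiff : ((S.1.orderIsoOfFin S.2 i : Fin n)) = ((S.1.orderIsoOfFin S.2 (ρ j) : Fin n))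
          ↔ ρ j = i := by
        constructor
        · intro h
          exact ((S.1.orderIsoOfFin S.2).injective (Subtype.ext h)).symm
        · intro h; rw [h]
      simp only [Equiv.Perm.permMatrix, PEquiv.toMatrix_apply, Equiv.toPEquiv_apply,
        Option.mem_some_iff]
      by_cases h : ρ j = i
      · rw [if_pos (hiff.2 h), if_pos h]
      · rw [if_neg (fun hc2 => h (hiff.1 hc2)), if_neg h]
    rw [hmat, Matrix.det_permutation, hρ, Equiv.Perm.sign_permCongr]
  · rw [dif_neg hinv]
    have hex : ∃ x ∈ S.1, σ x ∉ S.1 := by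
      by_contra hcon
      push_neg at hcon
      apply hinv
      have himg : S.1.image σ = S.1 := by
        apply Finset.eq_of_subset_of_card_le
        · intro y hy
          obtain ⟨x, hx, rfl⟩ := Finset.mem_image.1 hy
          exact hcon x hx
        · rw [Finset.card_image_of_injective _ σ.injective]
      intro x
      constructor
      · exact hcon x
      · intro hx
        rw [← himg] at hx
        obtain ⟨y, hy, hyx⟩ := Finset.mem_image.1 hx
        rwa [← σ.injective hyx]
    obtain ⟨x, hxS, hxN⟩ := hex
    obtain ⟨j, hj⟩ : ∃ j, ((S.1.orderIsoOfFin S.2 j : Fin n)) = x := by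
      obtain ⟨j, hj⟩ := (S.1.orderIsoOfFin S.2).surjective ⟨x, hxS⟩
      exact ⟨j, by rw [hj]⟩
    apply Matrix.det_eq_zero_of_row_eq_zero j
    intro i
    rw [Matrix.of_apply, hc j i, hj, if_neg]
    exact fun hc2 => hxN (hc2 ▸ (S.1.orderIsoOfFin S.2 i).2)

end TrExt2

open TrExt TrExt2 in
/-- The trace of a permutation `σ` on the `k`-th exterior power `Λ^k(ℚ^n)` equals the sum,
over all `k`-element subsets `S` of `Fin n` that are setwise invariant under `σ`, of the sign
of the permutation of `S` induced by `σ`. -/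
theorem trace_extPow_permutation {n : ℕ} (σ : Equiv.Perm (Fin n)) (k : ℕ) :
    LinearMap.trace ℚ _ (extPowMap ℚ k (Matrix.toLin' (permMat n σ))) =
      ∑ S : Finset (Fin n),
        if h : S.card = k ∧ ∀ x, x ∈ S ↔ σ x ∈ S then
          ((Equiv.Perm.sign (σ.subtypePerm (p := fun x => x ∈ S) (fun x => (h.2 x).symm)) : ℤ) : ℚ)
        else 0 := by
  classical
  rw [LinearMap.trace_eq_matrix_trace ℚ (bas n k), Matrix.trace]
  have hdiag : ∀ S : {s : Finset (Fin n) // s.card = k},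
      (LinearMap.toMatrix (bas n k) (bas n k)
        (extPowMap ℚ k (Matrix.toLin' (permMat n σ)))).diag S =
      if h : ∀ x, x ∈ S.1 ↔ σ x ∈ S.1 then
        ((Equiv.Perm.sign (σ.subtypePerm (p := fun x => x ∈ S.1) (fun x => (h x).symm)) : ℤ) : ℚ) else 0 := by
    intro S
    rw [Matrix.diag_apply, LinearMap.toMatrix_apply]
    have h1 : ((bas n k).repr (extPowMap ℚ k (Matrix.toLin' (permMat n σ)) (bas n k S))) S =
        (bas n k).coord S (extPowMap ℚ k (Matrix.toLin' (permMat n σ)) (bas n k S)) := rfl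
    rw [h1, coord_eq, LinearMap.comp_apply]
    have h2 : ((⋀[ℚ]^k (Fin n → ℚ)).subtype
        (extPowMap ℚ k (Matrix.toLin' (permMat n σ)) (bas n k S))) =
        ExteriorAlgebra.map (Matrix.toLin' (permMat n σ)) (fam n k S) := by
      show ((extPowMap ℚ k (Matrix.toLin' (permMat n σ)) (bas n k S) :
        ExteriorAlgebra ℚ (Fin n → ℚ))) = _
      rw [extPowMap, LinearMap.restrict_coe_apply]
      have hb : bas n k S = ⟨fam n k S, fam_mem S⟩ := Module.Basis.mk_apply _ _ _
      rw [hb]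
      rfl
    rw [h2, diag σ S]
  rw [Finset.sum_congr rfl (fun S _ => hdiag S)]
  have hzero : ∀ S ∈ (Finset.univ : Finset (Finset (Fin n))),
      (if h : S.card = k ∧ ∀ x, x ∈ S ↔ σ x ∈ S then
        ((Equiv.Perm.sign (σ.subtypePerm (p := fun x => x ∈ S) (fun x => (h.2 x).symm)) : ℤ) : ℚ) else 0) ≠ 0 → S.card = k := by
    intro S _ hne
    by_contra hc
    exact hne (dif_neg (fun hcon => hc hcon.1))
  have hR : (∑ S : Finset (Fin n),
      if h : S.card = k ∧ ∀ x, x ∈ S ↔ σ x ∈ S then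
        ((Equiv.Perm.sign (σ.subtypePerm (p := fun x => x ∈ S) (fun x => (h.2 x).symm)) : ℤ) : ℚ) else 0) =
      ∑ S : {s : Finset (Fin n) // s.card = k},
        if h : ∀ x, x ∈ S.1 ↔ σ x ∈ S.1 then
          ((Equiv.Perm.sign (σ.subtypePerm (p := fun x => x ∈ S.1) (fun x => (h x).symm)) : ℤ) : ℚ) else 0 := by
    rw [← Finset.sum_filter_of_ne hzero]
    rw [Finset.sum_subtype (p := fun s : Finset (Fin n) => s.card = k)
      (Finset.univ.filter (fun s : Finset (Fin n) => s.card = k)) (fun x => by simp)]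
    apply Finset.sum_congr rfl
    intro S _
    by_cases h : ∀ x, x ∈ S.1 ↔ σ x ∈ S.1
    · rw [dif_pos ⟨S.2, h⟩, dif_pos h]
    · rw [dif_neg (fun hc => h hc.2), dif_neg h]
  rw [hR]
end

section
/- For a permutation σ of Fin n (n ≥ 2), the trace of σ on the second exterior power Λ²(W) of the standard representation W equals C(m_1, 2) − m_2 − m_1 + 1, where m_1 is the number of fixed points and m_2 the number of 2-cycles of σ. -/
/-- The hyperplane `{v ∈ ℚ^n : Σ_i v_i = 0}`, carrying the standard representation of `S_n`. -/
noncomputable def zeroSum (n : ℕ) : Submodule ℚ (Fin n → ℚ) :=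
  LinearMap.ker (∑ i : Fin n, LinearMap.proj (R := ℚ) (φ := fun _ : Fin n => ℚ) i)

lemma permMat_mulVec {n : ℕ} (σ : Equiv.Perm (Fin n)) (v : Fin n → ℚ) (i : Fin n) :
    (permMat n σ).mulVec v i = v (σ⁻¹ i) := by
  simp only [permMat, Matrix.mulVec, dotProduct, Matrix.of_apply, ite_mul, one_mul,
    zero_mul]
  rw [Finset.sum_eq_single (σ⁻¹ i) (fun j _ hj => if_neg (fun h => hj (by simp [h])))
    (by simp)]
  simp

lemma permMat_mem_zeroSum {n : ℕ} (σ : Equiv.Perm (Fin n)) :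
    ∀ v ∈ zeroSum n, Matrix.toLin' (permMat n σ) v ∈ zeroSum n := by
  intro v hv
  simp only [zeroSum, LinearMap.mem_ker, LinearMap.sum_apply, LinearMap.proj_apply,
    Matrix.toLin'_apply] at hv ⊢
  simp only [permMat_mulVec]
  rw [Equiv.sum_comp σ⁻¹ fun j => v j]
  exact hv

section Aux

open ExteriorAlgebra

variable {M : Type*} [AddCommGroup M] [Module ℚ M]

lemma iMulti_two (v : Fin 2 → M) : ιMulti ℚ 2 v = ι ℚ (v 0) * ι ℚ (v 1) := by
  rw [ιMulti_apply]
  simp [List.ofFn_succ]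

lemma wedge_mem (x y : M) : ι ℚ x * ι ℚ y ∈ ⋀[ℚ]^2 M := by
  have h := iMulti_two ![x, y]
  simp only [Matrix.cons_val_zero, Matrix.cons_val_one, Matrix.head_cons] at h
  rw [← h]
  exact ιMulti_range ℚ 2 ⟨![x, y], by simp⟩

variable {m : ℕ} (b : Module.Basis (Fin m) ℚ M)

/-- index of pairs -/
abbrev Pairs (m : ℕ) := {p : Fin m × Fin m // p.1 < p.2}

noncomputable def wB (p : Pairs m) : ⋀[ℚ]^2 M :=
  ⟨ι ℚ (b p.1.1) * ι ℚ (b p.1.2), wedge_mem _ _⟩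

lemma span_wB : Submodule.span ℚ
    (Set.range fun p : Pairs m => (ι ℚ (b p.1.1) * ι ℚ (b p.1.2) : ExteriorAlgebra ℚ M))
    = ⋀[ℚ]^2 M := by
  apply le_antisymm
  · rw [Submodule.span_le]
    rintro _ ⟨p, rfl⟩
    exact wedge_mem _ _
  · rw [← ιMulti_span_fixedDegree, Submodule.span_le]
    rintro _ ⟨v, rfl⟩
    rw [iMulti_two]
    set S := Submodule.span ℚ
      (Set.range fun p : Pairs m => (ι ℚ (b p.1.1) * ι ℚ (b p.1.2) : ExteriorAlgebra ℚ M))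
    have key : ∀ i j : Fin m, (ι ℚ (b i) * ι ℚ (b j) : ExteriorAlgebra ℚ M) ∈ S := by
      intro i j
      rcases lt_trichotomy i j with h | h | h
      · exact Submodule.subset_span ⟨⟨(i, j), h⟩, rfl⟩
      · subst h; rw [ι_sq_zero]; exact Submodule.zero_mem S
      · have : (ι ℚ (b i) * ι ℚ (b j) : ExteriorAlgebra ℚ M) = -(ι ℚ (b j) * ι ℚ (b i)) :=
          eq_neg_of_add_eq_zero_left (ι_add_mul_swap _ _)
        rw [this]
        exact Submodule.neg_mem S (Submodule.subset_span ⟨⟨(j, i), h⟩, rfl⟩)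
    rw [← Module.Basis.sum_repr b (v 0), ← Module.Basis.sum_repr b (v 1), map_sum, map_sum,
      Finset.sum_mul]
    apply Submodule.sum_mem
    intro i _
    rw [Finset.mul_sum]
    apply Submodule.sum_mem
    intro j _
    rw [map_smul, map_smul, smul_mul_assoc, mul_smul_comm]
    exact Submodule.smul_mem S _ (Submodule.smul_mem S _ (key i j))

noncomputable def alt2 (p : Pairs m) : M [⋀^Fin 2]→ₗ[ℚ] ℚ :=
  Matrix.detRowAlternating.compLinearMap (LinearMap.pi ![b.coord p.1.1, b.coord p.1.2])

lemma alt2_apply (p : Pairs m) (v : Fin 2 → M) :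
    alt2 b p v = b.coord p.1.1 (v 0) * b.coord p.1.2 (v 1)
      - b.coord p.1.2 (v 0) * b.coord p.1.1 (v 1) := by
  have : alt2 b p v = Matrix.det (Matrix.of fun k l =>
      (![b.coord p.1.1, b.coord p.1.2] l) (v k)) := rfl
  rw [this, Matrix.det_fin_two]
  simp

noncomputable def Fp (p : Pairs m) : (⋀[ℚ]^2 M) →ₗ[ℚ] ℚ :=
  (liftAlternating (Function.update (fun i => (0 : M [⋀^Fin i]→ₗ[ℚ] ℚ)) 2 (alt2 b p))).comp
    (⋀[ℚ]^2 M).subtype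

lemma Fp_wedge (p : Pairs m) (x y : M) (h : ι ℚ x * ι ℚ y ∈ ⋀[ℚ]^2 M) :
    Fp b p ⟨ι ℚ x * ι ℚ y, h⟩ =
      b.coord p.1.1 x * b.coord p.1.2 y - b.coord p.1.2 x * b.coord p.1.1 y := by
  have h2 := iMulti_two (M := M) ![x, y]
  simp only [Matrix.cons_val_zero, Matrix.cons_val_one, Matrix.head_cons] at h2
  have : Fp b p ⟨ι ℚ x * ι ℚ y, h⟩ =
      liftAlternating (Function.update (fun i => (0 : M [⋀^Fin i]→ₗ[ℚ] ℚ)) 2 (alt2 b p))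
        (ιMulti ℚ 2 ![x, y]) := by
    rw [h2]; rfl
  rw [this, liftAlternating_apply_ιMulti, Function.update_self, alt2_apply]
  simp

lemma Fp_wB (p s : Pairs m) : Fp b p (wB b s) = if p = s then 1 else 0 := by
  rw [wB, Fp_wedge]
  simp only [Module.Basis.coord_apply, Module.Basis.repr_self]
  rcases eq_or_ne p s with h | h
  · subst h
    rw [if_pos rfl]
    simp [Finsupp.single_apply, p.2.ne, p.2.ne']
  · rw [if_neg h]
    have ht1 : ¬((s.1.1 : Fin m) = p.1.1 ∧ s.1.2 = p.1.2) := fun hc =>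
      h (Subtype.ext (Prod.ext hc.1.symm hc.2.symm))
    have ht2 : ¬((s.1.1 : Fin m) = p.1.2 ∧ s.1.2 = p.1.1) := by
      rintro ⟨a, c⟩
      exact absurd (a ▸ c ▸ s.2) (lt_asymm p.2)
    simp only [Finsupp.single_apply]
    by_cases h11 : s.1.1 = p.1.1 <;> by_cases h22 : s.1.2 = p.1.2 <;>
      by_cases h12 : s.1.1 = p.1.2 <;> by_cases h21 : s.1.2 = p.1.1 <;>
      simp_all

noncomputable def PhiB : (⋀[ℚ]^2 M) →ₗ[ℚ] (Pairs m → ℚ) := LinearMap.pi (fun p => Fp b p)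

noncomputable def PsiB : (Pairs m → ℚ) →ₗ[ℚ] (⋀[ℚ]^2 M) :=
  ∑ p : Pairs m, LinearMap.smulRight (LinearMap.proj p) (wB b p)

lemma PsiB_apply (c : Pairs m → ℚ) : PsiB b c = ∑ p : Pairs m, c p • wB b p := by
  simp [PsiB]

lemma PhiB_comp_PsiB : (PhiB b).comp (PsiB b) = LinearMap.id := by
  apply LinearMap.ext
  intro c
  funext p
  simp only [LinearMap.comp_apply, PhiB, LinearMap.pi_apply, PsiB_apply, map_sum, map_smul,
    LinearMap.id_coe, id_eq]
  simp only [Fp_wB, smul_eq_mul]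
  rw [Finset.sum_eq_single p (fun s _ hs => by rw [if_neg (Ne.symm hs), mul_zero])
    (by simp)]
  simp

lemma PsiB_surjective : Function.Surjective (PsiB b) := by
  rw [← LinearMap.range_eq_top]
  rw [eq_top_iff]
  have hspan : Submodule.span ℚ (Set.range (wB b)) = (⊤ : Submodule ℚ (⋀[ℚ]^2 M)) := by
    apply Submodule.map_injective_of_injective (⋀[ℚ]^2 M).injective_subtype
    rw [Submodule.map_span, Submodule.map_top, Submodule.range_subtype]
    rw [← Set.range_comp]
    exact span_wB b
  rw [← hspan, Submodule.span_le]
  rintro _ ⟨p, rfl⟩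
  exact ⟨Pi.single p 1, by rw [PsiB_apply, Finset.sum_eq_single p
    (fun s _ hs => by rw [Pi.single_eq_of_ne hs, zero_smul]) (by simp)]; simp⟩

noncomputable def eB : (⋀[ℚ]^2 M) ≃ₗ[ℚ] (Pairs m → ℚ) :=
  LinearEquiv.ofLinear (PhiB b) (PsiB b) (PhiB_comp_PsiB b) (by
    apply LinearMap.ext
    intro x
    obtain ⟨c, rfl⟩ := PsiB_surjective b x
    show PsiB b (PhiB b (PsiB b c)) = PsiB b c
    rw [← LinearMap.comp_apply (PhiB b), PhiB_comp_PsiB]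
    rfl)

lemma trace_eq_sum_Fp (g : (⋀[ℚ]^2 M) →ₗ[ℚ] (⋀[ℚ]^2 M)) :
    LinearMap.trace ℚ _ g = ∑ p : Pairs m, Fp b p (g (wB b p)) := by
  rw [← LinearMap.trace_conj' g (eB b), LinearMap.trace_eq_matrix_trace ℚ
    (Pi.basisFun ℚ (Pairs m)), Matrix.trace]
  apply Finset.sum_congr rfl
  intro p _
  simp only [Matrix.diag_apply, LinearMap.toMatrix_apply, Pi.basisFun_apply,
    LinearEquiv.conj_apply, LinearMap.comp_apply, LinearEquiv.coe_coe, Pi.basisFun_repr]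
  have h1 : (eB b).symm (Pi.single p 1) = wB b p := by
    show PsiB b (Pi.single p 1) = wB b p
    rw [PsiB_apply, Finset.sum_eq_single p
      (fun s _ hs => by rw [Pi.single_eq_of_ne hs, zero_smul]) (by simp)]
    simp
  rw [h1]
  rfl

lemma sum_pairs (A : Matrix (Fin m) (Fin m) ℚ) :
    ∑ p : Pairs m, (A p.1.1 p.1.1 * A p.1.2 p.1.2 - A p.1.1 p.1.2 * A p.1.2 p.1.1)
      = (Matrix.trace A ^ 2 - Matrix.trace (A * A)) / 2 := by
  set g : Fin m × Fin m → ℚ := fun q => A q.1 q.1 * A q.2 q.2 - A q.1 q.2 * A q.2 q.1 with hg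
  have h1 : ∑ p : Pairs m, g p.1
      = ∑ q ∈ Finset.univ.filter (fun q : Fin m × Fin m => q.1 < q.2), g q :=
    (Finset.sum_subtype _ (by simp) g).symm
  have hswap : ∑ q ∈ Finset.univ.filter (fun q : Fin m × Fin m => q.1 < q.2), g q
      = ∑ q ∈ Finset.univ.filter (fun q : Fin m × Fin m => q.2 < q.1), g q := by
    apply Finset.sum_nbij' (fun q => Prod.swap q) (fun q => Prod.swap q)
    · simp
    · simp
    · simp
    · simp
    · intro q _
      simp only [hg, Prod.fst_swap, Prod.snd_swap]
      ring
  have hunion : ∑ q ∈ Finset.univ.filter (fun q : Fin m × Fin m => q.1 ≠ q.2), g q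
      = ∑ q ∈ Finset.univ.filter (fun q : Fin m × Fin m => q.1 < q.2), g q
        + ∑ q ∈ Finset.univ.filter (fun q : Fin m × Fin m => q.2 < q.1), g q := by
    rw [← Finset.sum_union (by
      rw [Finset.disjoint_filter]
      intro q _ h1 h2
      exact absurd h2 (asymm h1))]
    · apply Finset.sum_congr _ (fun _ _ => rfl)
      ext q
      simp only [Finset.mem_filter, Finset.mem_union, Finset.mem_univ, true_and]
      constructor
      · intro h; exact h.lt_or_gt
      · rintro (h | h)
        · exact h.ne
        · exact h.ne'
  have htotal : ∑ q : Fin m × Fin m, g q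
      = ∑ q ∈ Finset.univ.filter (fun q : Fin m × Fin m => q.1 ≠ q.2), g q := by
    rw [← Finset.sum_filter_add_sum_filter_not Finset.univ
      (fun q : Fin m × Fin m => q.1 ≠ q.2) g]
    have : ∑ q ∈ Finset.univ.filter (fun q : Fin m × Fin m => ¬q.1 ≠ q.2), g q = 0 := by
      apply Finset.sum_eq_zero
      intro q hq
      simp only [Finset.mem_filter, ne_eq, not_not] at hq
      simp only [hg, hq.2, sub_self]
    rw [this, add_zero]
  have hexp : ∑ q : Fin m × Fin m, g q = Matrix.trace A ^ 2 - Matrix.trace (A * A) := by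
    have e1 : Matrix.trace A ^ 2 = ∑ i : Fin m, ∑ j : Fin m, A i i * A j j := by
      rw [Matrix.trace, sq, Finset.sum_mul_sum]
      simp [Matrix.diag]
    have e2 : Matrix.trace (A * A) = ∑ i : Fin m, ∑ j : Fin m, A i j * A j i := by
      simp [Matrix.trace, Matrix.mul_apply, Matrix.diag]
    rw [Fintype.sum_prod_type]
    simp only [hg, Finset.sum_sub_distrib]
    rw [e1, e2]
  have : ∑ p : Pairs m, g p.1 = (∑ q : Fin m × Fin m, g q) / 2 := by
    rw [htotal, hunion, ← hswap, h1]
    ring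
  rw [show (∑ p : Pairs m, (A p.1.1 p.1.1 * A p.1.2 p.1.2 - A p.1.1 p.1.2 * A p.1.2 p.1.1))
    = ∑ p : Pairs m, g p.1 from rfl, this, hexp]

include b in
lemma trace_extPowMap_two (f : M →ₗ[ℚ] M) :
    LinearMap.trace ℚ _ (extPowMap ℚ 2 f) =
      ((LinearMap.trace ℚ M f) ^ 2 - LinearMap.trace ℚ M (f ∘ₗ f)) / 2 := by
  classical
  set A := LinearMap.toMatrix b b f with hA
  rw [trace_eq_sum_Fp b]
  have hval : ∀ p : Pairs m, Fp b p (extPowMap ℚ 2 f (wB b p))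
      = A p.1.1 p.1.1 * A p.1.2 p.1.2 - A p.1.1 p.1.2 * A p.1.2 p.1.1 := by
    intro p
    have hcoe : (extPowMap ℚ 2 f (wB b p) : ExteriorAlgebra ℚ M)
        = ι ℚ (f (b p.1.1)) * ι ℚ (f (b p.1.2)) := by
      rw [extPowMap, LinearMap.restrict_coe_apply]
      show ExteriorAlgebra.map f (ι ℚ (b p.1.1) * ι ℚ (b p.1.2)) = _
      rw [map_mul, map_apply_ι, map_apply_ι]
    have : extPowMap ℚ 2 f (wB b p)
        = ⟨ι ℚ (f (b p.1.1)) * ι ℚ (f (b p.1.2)), wedge_mem _ _⟩ := Subtype.ext hcoe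
    rw [this, Fp_wedge]
    simp only [hA, LinearMap.toMatrix_apply, Module.Basis.coord_apply]
    ring
  rw [Finset.sum_congr rfl (fun p _ => hval p), sum_pairs,
    LinearMap.trace_eq_matrix_trace ℚ b, LinearMap.trace_eq_matrix_trace ℚ b,
    LinearMap.toMatrix_comp b b b, ← hA]

lemma zeroSum_mem_iff {n : ℕ} (v : Fin n → ℚ) : v ∈ zeroSum n ↔ ∑ i, v i = 0 := by
  simp [zeroSum, LinearMap.mem_ker, LinearMap.sum_apply]

noncomputable def projZero (n : ℕ) : Matrix (Fin n) (Fin n) ℚ :=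
  1 - (n : ℚ)⁻¹ • Matrix.of (fun _ _ => (1 : ℚ))

lemma projZero_mulVec {n : ℕ} (v : Fin n → ℚ) (i : Fin n) :
    (projZero n).mulVec v i = v i - (n : ℚ)⁻¹ * ∑ k, v k := by
  rw [projZero, Matrix.sub_mulVec]
  simp [Matrix.smul_mulVec, Matrix.mulVec, dotProduct, Finset.mul_sum]

lemma trace_restrict_permMat {n : ℕ} (hn : 2 ≤ n) (τ : Equiv.Perm (Fin n)) :
    LinearMap.trace ℚ _ ((Matrix.toLin' (permMat n τ)).restrict (permMat_mem_zeroSum τ)) =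
      ((Finset.univ.filter fun x => τ x = x).card : ℚ) - 1 := by
  have hn0 : (n : ℚ) ≠ 0 := by positivity
  set f := Matrix.toLin' (permMat n τ * projZero n) with hf
  have hf_mem : ∀ x, f x ∈ zeroSum n := by
    intro x
    rw [zeroSum_mem_iff]
    have : ∀ i, f x i = (projZero n).mulVec x (τ⁻¹ i) := by
      intro i
      rw [hf, Matrix.toLin'_apply, ← Matrix.mulVec_mulVec, permMat_mulVec]
    simp only [this]
    rw [Equiv.sum_comp τ⁻¹ fun j => (projZero n).mulVec x j]
    simp only [projZero_mulVec]
    rw [Finset.sum_sub_distrib, Finset.sum_const, Finset.card_univ, Fintype.card_fin]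
    rw [nsmul_eq_mul, ← mul_assoc, mul_inv_cancel₀ hn0, one_mul, sub_self]
  have heq : f.restrict (fun x _ => hf_mem x) =
      (Matrix.toLin' (permMat n τ)).restrict (permMat_mem_zeroSum τ) := by
    apply LinearMap.ext
    rintro ⟨x, hx⟩
    apply Subtype.ext
    rw [LinearMap.restrict_coe_apply, LinearMap.restrict_coe_apply, hf,
      Matrix.toLin'_apply, Matrix.toLin'_apply, ← Matrix.mulVec_mulVec]
    funext i
    show (permMat n τ).mulVec ((projZero n).mulVec x) i = (permMat n τ).mulVec x i
    rw [permMat_mulVec, permMat_mulVec, projZero_mulVec, (zeroSum_mem_iff x).1 hx]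
    ring
  rw [← heq, LinearMap.trace_restrict_eq_of_forall_mem (zeroSum n) f hf_mem]
  rw [hf, LinearMap.trace_eq_matrix_trace ℚ (Pi.basisFun ℚ (Fin n)),
    LinearMap.toMatrix_eq_toMatrix', LinearMap.toMatrix'_toLin']
  rw [projZero, mul_sub, mul_one, Matrix.trace_sub, Matrix.mul_smul, Matrix.trace_smul]
  have h1 : Matrix.trace (permMat n τ) = ((Finset.univ.filter fun x => τ x = x).card : ℚ) := by
    have e : Matrix.trace (permMat n τ)
        = ∑ i ∈ Finset.univ.filter (fun x => τ x = x), (1 : ℚ) := by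
      rw [Finset.sum_filter, Matrix.trace]
      apply Finset.sum_congr rfl
      intro i _
      simp only [Matrix.diag_apply, permMat, Matrix.of_apply]
      by_cases h : τ i = i
      · rw [if_pos h.symm, if_pos h]
      · rw [if_neg (Ne.symm h), if_neg h]
    rw [e, Finset.sum_const, nsmul_eq_mul, mul_one]
  have h2 : Matrix.trace (permMat n τ * (Matrix.of (fun _ _ => (1 : ℚ)) : Matrix (Fin n) (Fin n) ℚ)) = n := by
    rw [Matrix.trace]
    have : ∀ i, (permMat n τ * (Matrix.of (fun _ _ => (1 : ℚ)) : Matrix (Fin n) (Fin n) ℚ)).diag i = 1 := by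
      intro i
      simp only [Matrix.diag_apply, Matrix.mul_apply, permMat, Matrix.of_apply, ite_mul, one_mul,
        zero_mul, mul_one]
      rw [Finset.sum_eq_single (τ⁻¹ i) (fun j _ hj => if_neg (fun h => hj (by simp [h])))
        (by simp)]
      simp
    exact (Finset.sum_congr rfl fun i _ => this i).trans (by simp)
  rw [h1, h2]
  rw [smul_eq_mul, inv_mul_cancel₀ hn0]

open Equiv Equiv.Perm in
lemma card_sq_fixed {n : ℕ} (σ : Equiv.Perm (Fin n)) :
    (Finset.univ.filter fun x => σ (σ x) = x).card
      = (Finset.univ.filter fun x => σ x = x).card + 2 * σ.cycleType.count 2 := by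
  classical
  set F1 := Finset.univ.filter fun x => σ x = x with hF1
  set F2 := Finset.univ.filter fun x => σ (σ x) = x with hF2
  have hsub : F1 ⊆ F2 := by
    intro x hx
    simp only [hF1, Finset.mem_filter, Finset.mem_univ, true_and] at hx
    simp [hF2, hx]
  set T := σ.cycleFactorsFinset.filter (fun c => c.support.card = 2) with hT
  have claim1 : F2 \ F1 = T.biUnion Equiv.Perm.support := by
    ext x
    simp only [hF1, hF2, hT, Finset.mem_sdiff, Finset.mem_filter, Finset.mem_univ, true_and,
      Finset.mem_biUnion]
    constructor
    · rintro ⟨hx2, hx1⟩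
      refine ⟨σ.cycleOf x, ⟨cycleOf_mem_cycleFactorsFinset_iff.2
        (mem_support.2 hx1), ?_⟩, mem_support_cycleOf_iff.2 ⟨SameCycle.refl _ _,
        mem_support.2 hx1⟩⟩
      have hsupp : (σ.cycleOf x).support = {x, σ x} := by
        ext y
        rw [mem_support_cycleOf_iff]
        constructor
        · rintro ⟨⟨k, hk⟩, -⟩
          have key : ∀ k : ℤ, (σ ^ k) x = x ∨ (σ ^ k) x = σ x := by
            intro k
            induction k using Int.induction_on with
            | zero => exact Or.inl rfl
            | succ k ih =>
                have : σ ^ ((k : ℤ) + 1) = σ * σ ^ (k : ℤ) := by group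
                rw [this, Equiv.Perm.mul_apply]
                rcases ih with h | h
                · rw [h]; exact Or.inr rfl
                · rw [h, hx2]; exact Or.inl rfl
            | pred k ih =>
                have : σ ^ (-(k : ℤ) - 1) = σ⁻¹ * σ ^ (-(k : ℤ)) := by group
                rw [this, Equiv.Perm.mul_apply]
                have hinv : σ⁻¹ x = σ x := by
                  conv_lhs => rw [← hx2]
                  simp
                rcases ih with h | h
                · rw [h, hinv]; exact Or.inr rfl
                · rw [h, ← Equiv.Perm.mul_apply, inv_mul_cancel, Equiv.Perm.one_apply]; exact Or.inl rfl
          rcases key k with h | h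
          · rw [hk] at h; simp [h]
          · rw [hk] at h; simp [h]
        · intro hy
          simp only [Finset.mem_insert, Finset.mem_singleton] at hy
          refine ⟨?_, mem_support.2 hx1⟩
          rcases hy with rfl | rfl
          · exact SameCycle.refl _ _
          · exact ⟨1, by simp⟩
      rw [hsupp, Finset.card_insert_of_notMem (by simp [Ne.symm hx1]), Finset.card_singleton]
    · rintro ⟨c, hc, hxc⟩
      obtain ⟨hcf, hcard⟩ := hc
      obtain ⟨hcyc, hagree⟩ := mem_cycleFactorsFinset_iff.1 hcf
      have hx1 : σ x = c x := (hagree x hxc).symm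
      have hx2 : x ∈ c.support := hxc
      have hcx : c x ∈ c.support := apply_mem_support.2 hx2
      have hswap := card_support_eq_two.1 hcard
      obtain ⟨a, d, had, rfl⟩ := hswap
      have hcc : ∀ y, Equiv.swap a d (Equiv.swap a d y) = y := fun y => Equiv.swap_apply_self a d y
      constructor
      · rw [hx1, ← hagree _ hcx, hcc]
      · rw [hx1]
        exact mem_support.1 hx2
  have hdisj : ∀ c ∈ T, ∀ d ∈ T, c ≠ d → Disjoint c.support d.support := by
    intro c hc d hd hcd
    exact Equiv.Perm.Disjoint.disjoint_support
      (σ.cycleFactorsFinset_pairwise_disjoint (Finset.mem_filter.1 hc).1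
        (Finset.mem_filter.1 hd).1 hcd)
  have hcard2 : (F2 \ F1).card = 2 * T.card := by
    rw [claim1, Finset.card_biUnion hdisj]
    rw [Finset.sum_congr rfl (fun c hc => (Finset.mem_filter.1 hc).2), Finset.sum_const,
      smul_eq_mul, mul_comm]
  have hcount : σ.cycleType.count 2 = T.card := by
    rw [cycleType_def, Multiset.count_map, hT]
    rw [Finset.card, Finset.filter_val]
    congr 1
    apply Multiset.filter_congr
    intro c _
    exact eq_comm
  rw [← Finset.card_sdiff_add_card_eq_card hsub, hcard2, hcount, add_comm]

end Aux

/-- For `n ≥ 2`, the trace of `σ` on `Λ²(W)`, the second exterior power of the standard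
representation `W = {v : Σ v_i = 0}`, equals `C(m₁,2) - m₂ - m₁ + 1`, where `m₁` is the number
of fixed points and `m₂` the number of 2-cycles of `σ`. -/
theorem trace_extPow_two_standardRep {n : ℕ} (hn : 2 ≤ n) (σ : Equiv.Perm (Fin n)) :
    LinearMap.trace ℚ _
        (extPowMap ℚ 2 ((Matrix.toLin' (permMat n σ)).restrict (permMat_mem_zeroSum σ))) =
      (Nat.choose (Finset.univ.filter fun x => σ x = x).card 2 : ℚ)
        - σ.cycleType.count 2 - (Finset.univ.filter fun x => σ x = x).card + 1 := by
  classical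
  rw [trace_extPowMap_two (Module.finBasis ℚ (zeroSum n))]
  have hcomp : ((Matrix.toLin' (permMat n σ)).restrict (permMat_mem_zeroSum σ)) ∘ₗ
      ((Matrix.toLin' (permMat n σ)).restrict (permMat_mem_zeroSum σ))
      = (Matrix.toLin' (permMat n (σ * σ))).restrict (permMat_mem_zeroSum (σ * σ)) := by
    apply LinearMap.ext
    rintro ⟨x, hx⟩
    apply Subtype.ext
    rw [LinearMap.comp_apply, LinearMap.restrict_coe_apply, LinearMap.restrict_coe_apply,
      LinearMap.restrict_coe_apply]
    funext i
    rw [Matrix.toLin'_apply, Matrix.toLin'_apply, Matrix.toLin'_apply, permMat_mulVec,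
      permMat_mulVec, permMat_mulVec]
    simp [mul_inv_rev, Equiv.Perm.mul_apply]
  rw [hcomp, trace_restrict_permMat hn σ, trace_restrict_permMat hn (σ * σ)]
  have hfilter : (Finset.univ.filter fun x => (σ * σ) x = x)
      = (Finset.univ.filter fun x => σ (σ x) = x) := rfl
  rw [hfilter, card_sq_fixed σ, Nat.cast_choose_two]
  push_cast
  ring
end

section
/- For a permutation σ of Fin n, the following identity of formal power series over ℚ holds: exp(Σ_{k≥1} (x^k / k) · fix(σ^k)) = ∏_{i≥1} (1 − x^i)^{-m_i(σ)}, where fix(σ^k) is the number of fixed points of σ^k and m_i(σ) is the number of i-cycles of σ. -/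
open PowerSeries Finset Equiv Equiv.Perm

/-- The formal exponential of a power series (with zero constant term): the coefficient of
`x^k` in `exp f` is `Σ_{m ≤ k} (coeff k of f^m) / m!`. -/
noncomputable def expPS (f : PowerSeries ℚ) : PowerSeries ℚ :=
  PowerSeries.mk fun k =>
    ∑ m ∈ Finset.range (k + 1), (PowerSeries.coeff k (f ^ m)) / (m.factorial : ℚ)

/-- The full cycle type of `σ`, including cycles of length 1 (fixed points). -/
def fullCycleType {n : ℕ} (σ : Equiv.Perm (Fin n)) : Multiset ℕ :=
  σ.cycleType + Multiset.replicate (Finset.univ.filter fun x => σ x = x).card 1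

-- test ODE uniqueness
lemma ode_unique (T F G : PowerSeries ℚ) (h0 : PowerSeries.coeff 0 F = PowerSeries.coeff 0 G)
    (hF : d⁄dX ℚ F = T * F) (hG : d⁄dX ℚ G = T * G) : F = G := by
  ext k
  induction k using Nat.strong_induction_on with | _ k ih =>
  match k with
  | 0 => exact h0
  | k+1 =>
    have h1 : PowerSeries.coeff k (d⁄dX ℚ F) = PowerSeries.coeff k (d⁄dX ℚ G) := by
      rw [hF, hG, PowerSeries.coeff_mul, PowerSeries.coeff_mul]
      refine Finset.sum_congr rfl fun p hp => ?_
      rw [ih p.2 (Nat.lt_succ_of_le (Finset.HasAntidiagonal.antidiagonal.snd_le hp))]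
    rw [PowerSeries.coeff_derivative, PowerSeries.coeff_derivative] at h1
    exact mul_right_cancel₀ (Nat.cast_add_one_ne_zero k) h1


lemma coeff_pow_zero (f : PowerSeries ℚ) (h : constantCoeff f = 0) {m b : ℕ} (hbm : b < m) :
    PowerSeries.coeff b (f ^ m) = 0 := by
  obtain ⟨g, rfl⟩ := PowerSeries.X_dvd_iff.mpr h
  rw [mul_pow, PowerSeries.coeff_X_pow_mul', if_neg (by omega)]

lemma deriv_pow_succ (f : PowerSeries ℚ) (m : ℕ) :
    d⁄dX ℚ (f ^ (m + 1)) = ((m : ℚ) + 1) • (f ^ m * d⁄dX ℚ f) := by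
  rw [Derivation.leibniz_pow]
  simp only [Nat.add_sub_cancel, smul_smul]
  rw [show ((m:ℚ)+1) = ((m+1 : ℕ) : ℚ) by push_cast; ring, Nat.cast_smul_eq_nsmul, smul_eq_mul]

lemma deriv_expPS (f : PowerSeries ℚ) (h : constantCoeff f = 0) :
    d⁄dX ℚ (expPS f) = (d⁄dX ℚ f) * expPS f := by
  ext k
  rw [PowerSeries.coeff_derivative]
  have hL : PowerSeries.coeff (k+1) (expPS f) =
      ∑ m ∈ Finset.range (k + 1), PowerSeries.coeff (k+1) (f ^ (m+1)) / ((m+1).factorial : ℚ) := by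
    rw [expPS, PowerSeries.coeff_mk, Finset.sum_range_succ']
    simp [PowerSeries.coeff_one]
  rw [hL, PowerSeries.coeff_mul]
  symm
  have hexp : ∀ b ≤ k, PowerSeries.coeff b (expPS f) =
      ∑ m ∈ Finset.range (k + 1), PowerSeries.coeff b (f ^ m) / (m.factorial : ℚ) := by
    intro b hb
    rw [expPS, PowerSeries.coeff_mk]
    apply Finset.sum_subset (by intro x hx; simp at *; omega)
    intro m _ hm
    simp only [Finset.mem_range, not_lt] at hm
    rw [coeff_pow_zero f h (by omega), zero_div]
  calc ∑ p ∈ Finset.HasAntidiagonal.antidiagonal k, PowerSeries.coeff p.1 (d⁄dX ℚ f) * PowerSeries.coeff p.2 (expPS f)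
      = ∑ p ∈ Finset.HasAntidiagonal.antidiagonal k, ∑ m ∈ Finset.range (k+1),
          PowerSeries.coeff p.1 (d⁄dX ℚ f) * PowerSeries.coeff p.2 (f ^ m) / (m.factorial : ℚ) := by
        refine Finset.sum_congr rfl fun p hp => ?_
        rw [hexp p.2 (Finset.HasAntidiagonal.antidiagonal.snd_le hp), Finset.mul_sum]
        simp [mul_div_assoc]
    _ = ∑ m ∈ Finset.range (k+1), (PowerSeries.coeff k (d⁄dX ℚ f * f ^ m)) / (m.factorial : ℚ) := by
        rw [Finset.sum_comm]
        refine Finset.sum_congr rfl fun m _ => ?_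
        rw [PowerSeries.coeff_mul, Finset.sum_div]
    _ = ∑ m ∈ Finset.range (k+1), PowerSeries.coeff (k+1) (f ^ (m+1)) / ((m+1).factorial : ℚ) * (k+1) := by
        refine Finset.sum_congr rfl fun m _ => ?_
        have : d⁄dX ℚ f * f ^ m = (((m:ℚ)+1))⁻¹ • d⁄dX ℚ (f ^ (m+1)) := by
          rw [deriv_pow_succ, smul_smul, inv_mul_cancel₀ (by positivity), one_smul, mul_comm]
        rw [this, map_smul, smul_eq_mul, PowerSeries.coeff_derivative, Nat.factorial_succ]
        have hm1 : ((m:ℚ)+1) ≠ 0 := by positivity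
        have hmf : ((m.factorial :ℚ)) ≠ 0 := by exact_mod_cast m.factorial_ne_zero
        push_cast
        field_simp
        try ring
    _ = (∑ m ∈ Finset.range (k + 1), PowerSeries.coeff (k+1) (f ^ (m+1)) / ((m+1).factorial : ℚ)) * (k+1) := by
        rw [Finset.sum_mul]


lemma const_one_sub_X_pow (i : ℕ) (hi : 1 ≤ i) :
    constantCoeff ((1 : PowerSeries ℚ) - X ^ i) = 1 := by
  rw [map_sub, map_one, map_pow, constantCoeff_X, zero_pow (by omega), sub_zero]

lemma inv_geom (i : ℕ) (hi : 1 ≤ i) :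
    ((1 : PowerSeries ℚ) - X ^ i)⁻¹ = PowerSeries.mk fun j => if i ∣ j then 1 else 0 := by
  symm
  rw [PowerSeries.eq_inv_iff_mul_eq_one (by rw [const_one_sub_X_pow i hi]; norm_num)]
  ext k
  rw [mul_sub, mul_one, map_sub, PowerSeries.coeff_mul_X_pow']
  simp only [PowerSeries.coeff_mk, PowerSeries.coeff_one]
  rcases Nat.eq_zero_or_pos k with rfl | hk
  · simp [show ¬ i ≤ 0 by omega]
  · rw [if_neg (by omega : ¬ k = 0)]
    by_cases hdvd : i ∣ k
    · have hik : i ≤ k := Nat.le_of_dvd hk hdvd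
      rw [if_pos hdvd, if_pos hik, if_pos (Nat.dvd_sub hdvd dvd_rfl), sub_self]
    · rw [if_neg hdvd]
      by_cases hik : i ≤ k
      · rw [if_pos hik, if_neg, sub_zero]
        intro hd
        exact hdvd (by have := Nat.dvd_add hd (dvd_refl i); rwa [Nat.sub_add_cancel hik] at this)
      · rw [if_neg hik, sub_zero]

lemma deriv_prod {ι : Type*} (s : Finset ι) (F g : ι → PowerSeries ℚ)
    (h : ∀ i ∈ s, d⁄dX ℚ (F i) = g i * F i) :
    d⁄dX ℚ (∏ i ∈ s, F i) = (∑ i ∈ s, g i) * ∏ i ∈ s, F i := by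
  classical
  induction s using Finset.induction with
  | empty => simp
  | insert a s' hx ih =>
    rw [Finset.prod_insert hx, Finset.sum_insert hx, Derivation.leibniz, smul_eq_mul, smul_eq_mul,
      h a (Finset.mem_insert_self a s'), ih (fun i hi => h i (Finset.mem_insert_of_mem hi))]
    ring

lemma deriv_factor (i m : ℕ) (_hi : 1 ≤ i) :
    d⁄dX ℚ ((((1 : PowerSeries ℚ) - X ^ i)⁻¹) ^ m) =
      (PowerSeries.C ((m * i : ℕ) : ℚ) *
          ((X : PowerSeries ℚ) ^ (i - 1) * ((1 : PowerSeries ℚ) - X ^ i)⁻¹)) *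
        (((1 : PowerSeries ℚ) - X ^ i)⁻¹) ^ m := by
  set u := ((1 : PowerSeries ℚ) - X ^ i)⁻¹ with hu
  have hXi : d⁄dX ℚ ((1 : PowerSeries ℚ) - X ^ i) = -((i : PowerSeries ℚ) * X ^ (i - 1)) := by
    rw [map_sub, Derivation.map_one_eq_zero, Derivation.leibniz_pow, PowerSeries.derivative_X,
      smul_eq_mul, mul_one, zero_sub, nsmul_eq_mul]
  have hdu : d⁄dX ℚ u = (i : PowerSeries ℚ) * X ^ (i - 1) * u ^ 2 := by
    rw [hu, PowerSeries.derivative_inv', hXi]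
    ring
  rw [map_natCast]
  cases m with
  | zero => simp
  | succ m =>
    rw [Derivation.leibniz_pow, Nat.add_sub_cancel, smul_eq_mul, hdu, nsmul_eq_mul]
    push_cast
    ring


-- pointwise lemma
lemma pow_fix_iff {n : ℕ} (σ : Equiv.Perm (Fin n)) {x : Fin n} (hx : σ x ≠ x) (k : ℕ) :
    (σ ^ k) x = x ↔ (σ.cycleOf x).support.card ∣ k := by
  have hc : (σ.cycleOf x).IsCycle := isCycle_cycleOf σ hx
  have hx' : (σ.cycleOf x) x ≠ x := by rwa [cycleOf_apply_self]
  rw [← cycleOf_pow_apply_self, ← hc.pow_eq_one_iff' hx', ← orderOf_dvd_iff_pow_eq_one,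
    hc.orderOf]

lemma fix_count {n : ℕ} (σ : Equiv.Perm (Fin n)) {k : ℕ} (_hk : k ≠ 0) :
    ((Finset.univ.filter fun x => (σ ^ k) x = x).card : ℚ) =
      ∑ i ∈ Finset.Icc 1 n, if i ∣ k then (i : ℚ) * ((fullCycleType σ).count i) else 0 := by
  classical
  set Fx := Finset.univ.filter fun x : Fin n => σ x = x with hFx
  set F := σ.cycleFactorsFinset with hF
  -- decompose the fixed points of σ^k
  have hsplit : (Finset.univ.filter fun x => (σ ^ k) x = x) =
      Fx ∪ (F.filter fun c => c.support.card ∣ k).biUnion (fun c => c.support) := by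
    ext x
    simp only [Finset.mem_union, Finset.mem_filter, Finset.mem_univ, true_and,
      Finset.mem_biUnion, hFx, hF]
    constructor
    · intro hxk
      by_cases hx : σ x = x
      · exact Or.inl hx
      · refine Or.inr ⟨σ.cycleOf x, ⟨?_, (pow_fix_iff σ hx k).mp hxk⟩, ?_⟩
        · exact (cycleOf_mem_cycleFactorsFinset_iff).mpr (mem_support.mpr hx)
        · rw [mem_support_cycleOf_iff]
          exact ⟨SameCycle.refl _ _, mem_support.mpr hx⟩
    · rintro (hx | ⟨c, ⟨hcF, hck⟩, hxc⟩)
      · have : ∀ j, (σ ^ j) x = x := by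
          intro j; induction j with
          | zero => rfl
          | succ j ih => rw [pow_succ', Equiv.Perm.mul_apply, ih, hx]
        exact this k
      · have hx : σ x ≠ x := by
          have := (mem_cycleFactorsFinset_iff.mp hcF).2 x hxc
          have hxs : x ∈ σ.support := (mem_cycleFactorsFinset_support_le hcF) hxc
          exact mem_support.mp hxs
        have hcx : c = σ.cycleOf x := cycle_is_cycleOf hxc hcF
        exact (pow_fix_iff σ hx k).mpr (hcx ▸ hck)
  have hdisj : Disjoint Fx ((F.filter fun c => c.support.card ∣ k).biUnion (fun c => c.support)) := by
    rw [Finset.disjoint_left]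
    intro x hxFx hxB
    simp only [Finset.mem_biUnion, Finset.mem_filter] at hxB
    obtain ⟨c, ⟨hcF, _⟩, hxc⟩ := hxB
    have hxs : x ∈ σ.support := (mem_cycleFactorsFinset_support_le hcF) hxc
    rw [mem_support] at hxs
    simp only [hFx, Finset.mem_filter] at hxFx
    exact hxs hxFx.2
  have hcard : (Finset.univ.filter fun x => (σ ^ k) x = x).card =
      Fx.card + ∑ c ∈ F.filter fun c => c.support.card ∣ k, c.support.card := by
    rw [hsplit, Finset.card_union_of_disjoint hdisj, Finset.card_biUnion]
    intro c hc d hd hcd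
    exact Equiv.Perm.Disjoint.disjoint_support
      (σ.cycleFactorsFinset_pairwise_disjoint (Finset.mem_filter.mp hc).1
        (Finset.mem_filter.mp hd).1 hcd)
  -- now rewrite both sides
  rcases Nat.eq_zero_or_pos n with rfl | hn
  · simp [Finset.filter_eq_empty_iff]
  have h1mem : 1 ∈ Finset.Icc 1 n := by rw [Finset.mem_Icc]; omega
  have hcount2 : ∀ i, (σ.cycleType.count i) = (F.filter fun c => c.support.card = i).card := by
    intro i
    rw [Equiv.Perm.cycleType_def, Multiset.count_map]
    rw [Multiset.filter_congr (fun c _ => by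
      simp only [Function.comp_apply]; exact eq_comm)]
    rfl
  have hmaps : ∀ c ∈ F, c.support.card ∈ Finset.Icc 1 n := by
    intro c hc
    rw [Finset.mem_Icc]
    constructor
    · have := (mem_cycleFactorsFinset_iff.mp hc).1.two_le_card_support
      omega
    · have := Finset.card_le_univ c.support
      simpa using this
  have hfib := Finset.sum_fiberwise_of_maps_to hmaps
    (fun c => if c.support.card ∣ k then (c.support.card : ℚ) else 0)
  have hinner : ∀ i ∈ Finset.Icc 1 n,
      (∑ c ∈ F.filter fun c => c.support.card = i,
        if c.support.card ∣ k then (c.support.card : ℚ) else 0)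
      = if i ∣ k then (i : ℚ) * (σ.cycleType.count i) else 0 := by
    intro i _
    rw [Finset.sum_congr rfl (fun c hc => by
      rw [(Finset.mem_filter.mp hc).2]), Finset.sum_const, hcount2 i]
    split_ifs
    · rw [nsmul_eq_mul]; ring
    · simp
  have hsum1 : (∑ i ∈ Finset.Icc 1 n, if i ∣ k then (i : ℚ) * (σ.cycleType.count i) else 0)
      = ∑ c ∈ F.filter fun c => c.support.card ∣ k, (c.support.card : ℚ) := by
    rw [← Finset.sum_congr rfl hinner, hfib, Finset.sum_filter]
  have hsum2 : (∑ i ∈ Finset.Icc 1 n,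
      if i ∣ k then (i : ℚ) * (if 1 = i then (Fx.card : ℚ) else 0) else 0) = (Fx.card : ℚ) := by
    rw [Finset.sum_eq_single_of_mem 1 h1mem (fun i _ hi => by simp [Ne.symm hi])]
    simp [Nat.one_dvd]
  have hRHS : (∑ i ∈ Finset.Icc 1 n, if i ∣ k then (i : ℚ) * ((fullCycleType σ).count i) else 0)
      = (∑ i ∈ Finset.Icc 1 n, if i ∣ k then (i : ℚ) * (σ.cycleType.count i) else 0)
        + (Fx.card : ℚ) := by
    rw [← hsum2, ← Finset.sum_add_distrib]
    refine Finset.sum_congr rfl fun i _ => ?_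
    rw [fullCycleType, Multiset.count_add, Multiset.count_replicate]
    split_ifs <;> push_cast <;> ring
  rw [hRHS, hsum1, hcard]
  push_cast
  ring

/-- `exp(Σ_{k≥1} (x^k/k)·fix(σ^k)) = ∏_{i≥1} (1 - x^i)^{-m_i(σ)}`, where `fix(σ^k)` is the
number of fixed points of `σ^k` and `m_i(σ)` the number of `i`-cycles of `σ` (all cycle lengths
lie in `[1, n]`, so the product may be taken over `1 ≤ i ≤ n`). -/
theorem exp_fix_genfun {n : ℕ} (σ : Equiv.Perm (Fin n)) :
    expPS (PowerSeries.mk fun k =>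
        if k = 0 then 0
        else ((Finset.univ.filter fun x => (σ ^ k) x = x).card : ℚ) / (k : ℚ)) =
      ∏ i ∈ Finset.Icc 1 n,
        (((1 : PowerSeries ℚ) - (X : PowerSeries ℚ) ^ i)⁻¹) ^ ((fullCycleType σ).count i) := by
  classical
  set S : PowerSeries ℚ := PowerSeries.mk fun k =>
      if k = 0 then 0
      else ((Finset.univ.filter fun x => (σ ^ k) x = x).card : ℚ) / (k : ℚ) with hSdef
  have hS0 : constantCoeff S = 0 := by
    rw [hSdef, ← PowerSeries.coeff_zero_eq_constantCoeff, PowerSeries.coeff_mk, if_pos rfl]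
  set G : PowerSeries ℚ := ∏ i ∈ Finset.Icc 1 n,
      (((1 : PowerSeries ℚ) - (X : PowerSeries ℚ) ^ i)⁻¹) ^ ((fullCycleType σ).count i) with hGdef
  -- coefficient of the derivative of S
  have hcoeffT : ∀ k, PowerSeries.coeff k (d⁄dX ℚ S) =
      ((Finset.univ.filter fun x => (σ ^ (k+1)) x = x).card : ℚ) := by
    intro k
    rw [PowerSeries.coeff_derivative, hSdef, PowerSeries.coeff_mk, if_neg (Nat.succ_ne_zero k)]
    push_cast
    field_simp
  -- derivative of G
  have hgdef : ∀ i ∈ Finset.Icc 1 n,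
      d⁄dX ℚ ((((1 : PowerSeries ℚ) - (X : PowerSeries ℚ) ^ i)⁻¹) ^ ((fullCycleType σ).count i)) =
        (PowerSeries.C ((((fullCycleType σ).count i) * i : ℕ) : ℚ) *
          ((X : PowerSeries ℚ) ^ (i - 1) * ((1 : PowerSeries ℚ) - X ^ i)⁻¹)) *
        (((1 : PowerSeries ℚ) - (X : PowerSeries ℚ) ^ i)⁻¹) ^ ((fullCycleType σ).count i) := by
    intro i hi
    exact deriv_factor i _ (Finset.mem_Icc.mp hi).1
  have hdG : d⁄dX ℚ G = (∑ i ∈ Finset.Icc 1 n,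
      PowerSeries.C ((((fullCycleType σ).count i) * i : ℕ) : ℚ) *
        ((X : PowerSeries ℚ) ^ (i - 1) * ((1 : PowerSeries ℚ) - X ^ i)⁻¹)) * G := by
    rw [hGdef]
    exact deriv_prod _ _ _ hgdef
  -- the sum of logarithmic derivatives equals d⁄dX S
  have hTsum : (∑ i ∈ Finset.Icc 1 n,
      PowerSeries.C ((((fullCycleType σ).count i) * i : ℕ) : ℚ) *
        ((X : PowerSeries ℚ) ^ (i - 1) * ((1 : PowerSeries ℚ) - X ^ i)⁻¹)) = d⁄dX ℚ S := by
    ext k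
    rw [map_sum, hcoeffT k, fix_count σ (Nat.succ_ne_zero k)]
    refine Finset.sum_congr rfl fun i hi => ?_
    have hi1 : 1 ≤ i := (Finset.mem_Icc.mp hi).1
    rw [PowerSeries.coeff_C_mul, inv_geom i hi1, PowerSeries.coeff_X_pow_mul']
    by_cases hd : i ∣ k + 1
    · have hik : i ≤ k + 1 := Nat.le_of_dvd (Nat.succ_pos k) hd
      rw [if_pos (by omega : i - 1 ≤ k), PowerSeries.coeff_mk,
        if_pos (show i ∣ k - (i-1) by
          have h1 : k - (i - 1) = (k + 1) - i := by omega
          rw [h1]; exact Nat.dvd_sub hd dvd_rfl),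
        if_pos hd]
      push_cast
      ring
    · rw [if_neg hd]
      by_cases hik : i - 1 ≤ k
      · rw [if_pos hik, PowerSeries.coeff_mk, if_neg, mul_zero]
        intro hdd
        apply hd
        have h1 : (k - (i-1)) + i = k + 1 := by omega
        have := Nat.dvd_add hdd (dvd_refl i)
        rwa [h1] at this
      · rw [if_neg hik, mul_zero]
  -- initial conditions
  have h0 : PowerSeries.coeff 0 (expPS S) = PowerSeries.coeff 0 G := by
    have hL : PowerSeries.coeff 0 (expPS S) = 1 := by
      rw [expPS, PowerSeries.coeff_mk]
      simp
    have hR : PowerSeries.coeff 0 G = 1 := by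
      rw [PowerSeries.coeff_zero_eq_constantCoeff, hGdef, map_prod]
      refine Finset.prod_eq_one fun i hi => ?_
      have hi1 : 1 ≤ i := (Finset.mem_Icc.mp hi).1
      rw [map_pow, inv_geom i hi1, ← PowerSeries.coeff_zero_eq_constantCoeff,
        PowerSeries.coeff_mk, if_pos (dvd_zero i), one_pow]
    rw [hL, hR]
  exact ode_unique (d⁄dX ℚ S) (expPS S) G h0 (deriv_expPS S hS0) (by rw [hdG, hTsum])
end

section
/- The cyclotomic (necklace) identity: for every natural number q, the following identity of formal power series over ℚ holds: 1/(1 − q·t) = ∏_{n≥1} (1 − t^n)^{−M(q,n)}, where M(q,n) = (1/n) Σ_{d ∣ n} μ(d) q^{n/d} is the necklace number (μ is the Möbius function). -/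
open PowerSeries Finset

lemma geom_inv (r : ℚ) : (((1 : PowerSeries ℚ) - r • X))⁻¹ = PowerSeries.mk fun n => r ^ n := by
  have hc : constantCoeff ((1 : PowerSeries ℚ) - r • X) ≠ 0 := by
    simp [smul_eq_C_mul]
  rw [PowerSeries.inv_eq_iff_mul_eq_one hc]
  ext n
  rw [mul_sub, mul_one, smul_eq_C_mul, ← mul_assoc, mul_comm _ (C r), mul_assoc]
  cases n with
  | zero => simp
  | succ n => simp [pow_succ, mul_comm]

lemma indicator_inv (m : ℕ) (hm : 1 ≤ m) :
    (X : PowerSeries ℚ) ^ (m - 1) * ((1 : PowerSeries ℚ) - X ^ m)⁻¹ =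
      PowerSeries.mk fun j => if m ∣ (j + 1) then (1 : ℚ) else 0 := by
  have hc : constantCoeff ((1 : PowerSeries ℚ) - X ^ m) ≠ 0 := by
    simp [zero_pow (by omega : m ≠ 0)]
  symm
  rw [PowerSeries.eq_mul_inv_iff_mul_eq hc]
  ext j
  rw [mul_sub, mul_one, map_sub, coeff_mul_X_pow', coeff_X_pow, coeff_mk]
  by_cases hmj : m ≤ j
  · have h1 : m ∣ j + 1 ↔ m ∣ j - m + 1 := by
      have : j - m + 1 = j + 1 - m := by omega
      rw [this]
      constructor
      · intro h; exact (Nat.dvd_sub h dvd_rfl)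
      · intro h; have := Nat.dvd_add h (dvd_refl m); simpa [Nat.sub_add_cancel (by omega : m ≤ j+1)] using this
    have h2 : ¬ (j = m - 1) := by omega
    simp [hmj, h2, h1]
  · simp only [if_neg hmj, sub_zero]
    by_cases h : m ∣ j + 1
    · have h3 : j + 1 = m := le_antisymm (by omega) (Nat.le_of_dvd (by omega) h)
      rw [if_pos h, if_pos (by omega : j = m - 1)]
    · have : ¬ (j = m - 1) := by rintro rfl; exact h (by simpa [Nat.sub_add_cancel hm] using dvd_refl m)
      simp [h, this]

lemma inv_pow' (f : PowerSeries ℚ) (m : ℕ) : (f⁻¹) ^ m = (f ^ m)⁻¹ := by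
  induction m with
  | zero => simp
  | succ n ih => rw [pow_succ, pow_succ, ih, PowerSeries.mul_inv_rev, mul_comm]

lemma prod_inv' (s : Finset ℕ) (f : ℕ → PowerSeries ℚ) :
    ∏ n ∈ s, (f n)⁻¹ = (∏ n ∈ s, f n)⁻¹ := by
  induction s using Finset.cons_induction with
  | empty => simp
  | cons a s ha ih => rw [Finset.prod_cons, Finset.prod_cons, ih, PowerSeries.mul_inv_rev, mul_comm]

lemma deriv_congr {f g : PowerSeries ℚ} {k : ℕ}
    (h0 : constantCoeff f = constantCoeff g) (hg : constantCoeff g ≠ 0)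
    (hd : ∀ j < k, coeff j (d⁄dX ℚ f * g) = coeff j (d⁄dX ℚ g * f)) :
    ∀ j ≤ k, coeff j f = coeff j g := by
  have hc0 : coeff 0 f = coeff 0 g := by
    simpa [coeff_zero_eq_constantCoeff] using h0
  have hg0 : coeff 0 g ≠ 0 := by
    simpa [coeff_zero_eq_constantCoeff] using hg
  intro j
  induction j using Nat.strong_induction_on with
  | _ j ih =>
    intro hj
    cases j with
    | zero => exact hc0
    | succ n =>
      have hn := hd n (by omega)
      rw [coeff_mul, coeff_mul, Finset.Nat.sum_antidiagonal_eq_sum_range_succ_mk,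
        Finset.Nat.sum_antidiagonal_eq_sum_range_succ_mk, Finset.sum_range_succ,
        Finset.sum_range_succ] at hn
      have hs : ∑ i ∈ range n, coeff i (d⁄dX ℚ f) * coeff (n - i) g
          = ∑ i ∈ range n, coeff i (d⁄dX ℚ g) * coeff (n - i) f := by
        apply Finset.sum_congr rfl
        intro i hi
        rw [Finset.mem_range] at hi
        rw [coeff_derivative, coeff_derivative, ih (i + 1) (by omega) (by omega),
          ih (n - i) (by omega) (by omega)]
      rw [hs] at hn
      have h2 := add_left_cancel hn
      rw [Nat.sub_self, coeff_derivative, coeff_derivative, hc0] at h2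
      have hn1 : ((n : ℚ) + 1) ≠ 0 := by positivity
      have h3 := mul_right_cancel₀ hg0 h2
      exact mul_right_cancel₀ hn1 h3

lemma plogDeriv_mul {f g : PowerSeries ℚ} (hf : constantCoeff f ≠ 0)
    (hg : constantCoeff g ≠ 0) :
    d⁄dX ℚ (f * g) * (f * g)⁻¹ = d⁄dX ℚ f * f⁻¹ + d⁄dX ℚ g * g⁻¹ := by
  rw [Derivation.leibniz, PowerSeries.mul_inv_rev, smul_eq_mul, smul_eq_mul]
  have h1 : f * f⁻¹ = 1 := PowerSeries.mul_inv_cancel f hf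
  have h2 : g * g⁻¹ = 1 := PowerSeries.mul_inv_cancel g hg
  calc (f * d⁄dX ℚ g + g * d⁄dX ℚ f) * (g⁻¹ * f⁻¹)
      = (f * f⁻¹) * (d⁄dX ℚ g * g⁻¹) + (g * g⁻¹) * (d⁄dX ℚ f * f⁻¹) := by ring
    _ = d⁄dX ℚ f * f⁻¹ + d⁄dX ℚ g * g⁻¹ := by rw [h1, h2]; ring

lemma plogDeriv_pow {f : PowerSeries ℚ} (hf : constantCoeff f ≠ 0) (m : ℕ) :
    d⁄dX ℚ (f ^ m) * (f ^ m)⁻¹ = m • (d⁄dX ℚ f * f⁻¹) := by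
  induction m with
  | zero => simp
  | succ n ih =>
    have hfn : constantCoeff (f ^ n) ≠ 0 := by
      rw [map_pow]; exact pow_ne_zero _ hf
    rw [pow_succ, plogDeriv_mul hfn hf, ih, succ_nsmul]

lemma plogDeriv_prod (s : Finset ℕ) (f : ℕ → PowerSeries ℚ)
    (h : ∀ n ∈ s, constantCoeff (f n) ≠ 0) :
    d⁄dX ℚ (∏ n ∈ s, f n) * (∏ n ∈ s, f n)⁻¹ = ∑ n ∈ s, d⁄dX ℚ (f n) * (f n)⁻¹ := by
  induction s using Finset.cons_induction with
  | empty => simp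
  | cons a s ha ih =>
    have hs : constantCoeff (∏ n ∈ s, f n) ≠ 0 := by
      rw [map_prod]
      exact Finset.prod_ne_zero_iff.mpr fun n hn => h n (Finset.mem_cons_of_mem hn)
    rw [Finset.prod_cons, Finset.sum_cons, plogDeriv_mul (h a (Finset.mem_cons_self a s)) hs,
      ih fun n hn => h n (Finset.mem_cons_of_mem hn)]

lemma logDeriv_one_sub_X_pow (n : ℕ) (hn : 1 ≤ n) :
    d⁄dX ℚ ((1 : PowerSeries ℚ) - X ^ n) * ((1 : PowerSeries ℚ) - X ^ n)⁻¹ =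
      -(n • PowerSeries.mk fun j => if n ∣ (j + 1) then (1 : ℚ) else 0) := by
  have hD : d⁄dX ℚ ((1 : PowerSeries ℚ) - X ^ n) = -(n • (X : PowerSeries ℚ) ^ (n - 1)) := by
    rw [map_sub, Derivation.leibniz_pow, derivative_X, Derivation.map_one_eq_zero]
    simp [smul_eq_mul]
  rw [hD, neg_mul, smul_mul_assoc, indicator_inv n hn]

/-- The cyclotomic (necklace) identity: if `M q n` is the necklace number given by Witt's
formula `n·M(q,n) = Σ_{d∣n} μ(d) q^{n/d}`, then `1/(1 - q·t) = ∏_{n≥1} (1 - t^n)^{-M(q,n)}`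
as formal power series over `ℚ`; the infinite product converges `t`-adically, so its `k`-th
coefficient agrees with that of the finite product over `1 ≤ n ≤ k`. -/
theorem necklace_identity (q : ℕ) (M : ℕ → ℕ)
    (hM : ∀ n : ℕ, 1 ≤ n →
      ((M n : ℚ) : ℚ) = (1 / (n : ℚ)) *
        ∑ d ∈ n.divisors, ((ArithmeticFunction.moebius d : ℤ) : ℚ) * (q : ℚ) ^ (n / d)) :
    ∀ k : ℕ,
      PowerSeries.coeff k (((1 : PowerSeries ℚ) - (q : ℚ) • (X : PowerSeries ℚ))⁻¹) =
        PowerSeries.coeff k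
          (∏ n ∈ Finset.Icc 1 k,
            (((1 : PowerSeries ℚ) - (X : PowerSeries ℚ) ^ n)⁻¹) ^ (M n)) := by
  -- Witt's formula, Möbius-inverted
  have hW : ∀ n : ℕ, 0 < n → ∑ i ∈ n.divisors, ((i : ℚ) * (M i : ℚ)) = (q : ℚ) ^ n := by
    refine (ArithmeticFunction.sum_eq_iff_sum_mul_moebius_eq
      (f := fun i => (i : ℚ) * (M i : ℚ)) (g := fun n => (q : ℚ) ^ n)).mpr ?_
    intro n hn
    rw [Nat.sum_divisorsAntidiagonal
      (f := fun d e => ((ArithmeticFunction.moebius d : ℤ) : ℚ) * (q : ℚ) ^ e)]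
    have hn0 : (n : ℚ) ≠ 0 := Nat.cast_ne_zero.mpr (by omega)
    rw [hM n hn]
    field_simp
  intro k
  set G : PowerSeries ℚ := (1 : PowerSeries ℚ) - (q : ℚ) • X with hGdef
  set F : PowerSeries ℚ :=
    ∏ n ∈ Finset.Icc 1 k, ((1 : PowerSeries ℚ) - (X : PowerSeries ℚ) ^ n) ^ (M n) with hFdef
  have hc1 : ∀ n ∈ Finset.Icc 1 k, constantCoeff ((1 : PowerSeries ℚ) - X ^ n) ≠ 0 := by
    intro n hn
    rw [Finset.mem_Icc] at hn
    simp [zero_pow (by omega : n ≠ 0)]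
  have hcF : constantCoeff F ≠ 0 := by
    rw [hFdef, map_prod]
    exact Finset.prod_ne_zero_iff.mpr fun n hn => by
      rw [map_pow]; exact pow_ne_zero _ (hc1 n hn)
  have hcG : constantCoeff G ≠ 0 := by
    rw [hGdef, smul_eq_C_mul]; simp
  -- log derivative of F
  have hLF : ∀ j < k, coeff j (d⁄dX ℚ F * F⁻¹) = -((q : ℚ) ^ (j + 1)) := by
    intro j hj
    rw [hFdef, plogDeriv_prod _ _ (fun n hn => by rw [map_pow]; exact pow_ne_zero _ (hc1 n hn))]
    have hterm : ∀ n ∈ Finset.Icc 1 k,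
        coeff j (d⁄dX ℚ (((1 : PowerSeries ℚ) - X ^ n) ^ (M n)) *
          (((1 : PowerSeries ℚ) - X ^ n) ^ (M n))⁻¹)
        = -(((n : ℚ) * (M n : ℚ)) * (if n ∣ j + 1 then 1 else 0)) := by
      intro n hn
      rw [Finset.mem_Icc] at hn
      rw [plogDeriv_pow (by simp [zero_pow (by omega : n ≠ 0)]),
        logDeriv_one_sub_X_pow n (by omega), smul_neg, map_neg, map_nsmul, map_nsmul, coeff_mk]
      push_cast
      ring
    rw [map_sum, Finset.sum_congr rfl hterm]
    have hfil : Finset.filter (fun n => n ∣ j + 1) (Finset.Icc 1 k) = (j + 1).divisors := by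
      ext m
      simp only [Finset.mem_filter, Finset.mem_Icc, Nat.mem_divisors]
      constructor
      · rintro ⟨-, h⟩; exact ⟨h, by omega⟩
      · rintro ⟨h, -⟩
        exact ⟨⟨Nat.pos_of_dvd_of_pos h (by omega), le_trans (Nat.le_of_dvd (by omega) h) (by omega)⟩, h⟩
    simp only [mul_ite, mul_one, mul_zero, Finset.sum_neg_distrib]
    rw [← Finset.sum_filter, hfil, hW (j + 1) (by omega)]
  have hLG : ∀ j : ℕ, coeff j (d⁄dX ℚ G * G⁻¹) = -((q : ℚ) ^ (j + 1)) := by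
    intro j
    have hDG : d⁄dX ℚ G = -((q : ℚ) • (1 : PowerSeries ℚ)) := by
      rw [hGdef, map_sub, Derivation.map_one_eq_zero, Derivation.map_smul, derivative_X]
      simp
    rw [hDG, hGdef, geom_inv, neg_mul, smul_mul_assoc, one_mul, map_neg, map_smul, coeff_mk,
      smul_eq_mul, pow_succ, mul_comm]
  -- X^k divides the difference of log derivatives
  have hdvd : (X : PowerSeries ℚ) ^ k ∣ (d⁄dX ℚ F * F⁻¹ - d⁄dX ℚ G * G⁻¹) := by
    rw [X_pow_dvd_iff]
    intro m hm
    rw [map_sub, hLF m hm, hLG m, sub_self]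
  -- hypotheses of the uniqueness lemma
  have hd : ∀ j < k, coeff j (d⁄dX ℚ F * G) = coeff j (d⁄dX ℚ G * F) := by
    intro j hj
    have key : d⁄dX ℚ F * G - d⁄dX ℚ G * F
        = (d⁄dX ℚ F * F⁻¹ - d⁄dX ℚ G * G⁻¹) * (F * G) := by
      have e1 : F⁻¹ * F = 1 := PowerSeries.inv_mul_cancel F hcF
      have e2 : G⁻¹ * G = 1 := PowerSeries.inv_mul_cancel G hcG
      calc d⁄dX ℚ F * G - d⁄dX ℚ G * F
          = d⁄dX ℚ F * 1 * G - d⁄dX ℚ G * 1 * F := by ring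
        _ = d⁄dX ℚ F * (F⁻¹ * F) * G - d⁄dX ℚ G * (G⁻¹ * G) * F := by rw [e1, e2]
        _ = (d⁄dX ℚ F * F⁻¹ - d⁄dX ℚ G * G⁻¹) * (F * G) := by ring
    have h0 : coeff j (d⁄dX ℚ F * G - d⁄dX ℚ G * F) = 0 := by
      rw [key]
      exact X_pow_dvd_iff.mp (hdvd.mul_right (F * G)) j hj
    rw [map_sub, sub_eq_zero] at h0
    exact h0
  have h00 : constantCoeff F = constantCoeff G := by
    have hF1 : constantCoeff F = 1 := by
      rw [hFdef, map_prod]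
      apply Finset.prod_eq_one
      intro n hn
      rw [Finset.mem_Icc] at hn
      rw [map_pow, map_sub, map_one, map_pow, constantCoeff_X,
        zero_pow (by omega : n ≠ 0), sub_zero, one_pow]
    have hG1 : constantCoeff G = 1 := by
      rw [hGdef, smul_eq_C_mul]; simp
    rw [hF1, hG1]
  have hFG : ∀ j ≤ k, coeff j F = coeff j G := deriv_congr h00 hcG hd
  -- transfer to inverses
  have hdvd2 : (X : PowerSeries ℚ) ^ (k + 1) ∣ (G - F) := by
    rw [X_pow_dvd_iff]
    intro m hm
    rw [map_sub, hFG m (by omega), sub_self]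
  have hinv : F⁻¹ - G⁻¹ = (G - F) * (F⁻¹ * G⁻¹) := by
    have e1 : F * F⁻¹ = 1 := PowerSeries.mul_inv_cancel F hcF
    have e2 : G * G⁻¹ = 1 := PowerSeries.mul_inv_cancel G hcG
    calc F⁻¹ - G⁻¹ = 1 * F⁻¹ - 1 * G⁻¹ := by ring
      _ = (G * G⁻¹) * F⁻¹ - (F * F⁻¹) * G⁻¹ := by rw [e1, e2]
      _ = (G - F) * (F⁻¹ * G⁻¹) := by ring
  have hck : coeff k (F⁻¹ - G⁻¹) = 0 := by
    rw [hinv]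
    exact X_pow_dvd_iff.mp (hdvd2.mul_right _) k (by omega)
  rw [map_sub, sub_eq_zero] at hck
  -- identify the goal's RHS with F⁻¹
  have hRHS : (∏ n ∈ Finset.Icc 1 k,
      (((1 : PowerSeries ℚ) - (X : PowerSeries ℚ) ^ n)⁻¹) ^ (M n)) = F⁻¹ := by
    rw [hFdef, ← prod_inv']
    exact Finset.prod_congr rfl fun n _ => inv_pow' _ _
  rw [hRHS, ← hck]
end

section
/- The Hilbert series of the ring of symmetric polynomials in n variables over ℚ: for every d ≥ 0, the dimension of the space of symmetric polynomials in ℚ[x_1,...,x_n] that are homogeneous of degree d equals the number of partitions of d into parts of size at most n; equivalently, Σ_{d≥0} dim(ℚ[x_1,...,x_n]^{S_n}_d) t^d = ∏_{i=1}^n (1 − t^i)^{-1} as formal power series. -/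
/-- The space of symmetric polynomials in `ℚ[x_1,…,x_n]` that are homogeneous of degree `d`. -/
noncomputable def symHomogeneous (n d : ℕ) : Submodule ℚ (MvPolynomial (Fin n) ℚ) :=
  MvPolynomial.homogeneousSubmodule (Fin n) ℚ d ⊓
    Subalgebra.toSubmodule (MvPolynomial.symmetricSubalgebra (Fin n) ℚ)

open MvPolynomial Finset

namespace SymHilbert

variable {n d : ℕ}

/-- total degree of a finsupp on `Fin n` as a sum over all indices -/
lemma degree_eq_sum_univ (m : Fin n →₀ ℕ) : m.degree = ∑ i : Fin n, m i := by
  rw [Finsupp.degree]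
  exact Finset.sum_subset (Finset.subset_univ _)
    (fun i _ hi => Finsupp.notMem_support_iff.mp hi)

lemma degree_mapDomain (σ : Equiv.Perm (Fin n)) (m : Fin n →₀ ℕ) :
    (Finsupp.mapDomain ⇑σ m).degree = m.degree := by
  simp only [degree_eq_sum_univ, Finsupp.mapDomain_equiv_apply]
  exact Fintype.sum_equiv σ.symm _ _ (fun i => rfl)

/-- The index set: antitone exponent vectors of total degree `d`. -/
def A (n d : ℕ) : Type :=
  {m : Fin n →₀ ℕ // Antitone ⇑m ∧ m.degree = d}

instance : Finite (A n d) := by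
  refine Finite.of_injective
    (fun m : A n d => (fun i => (⟨min (m.1 i) d, by omega⟩ : Fin (d+1)))) ?_
  intro a b h
  have key : ∀ (m : Fin n →₀ ℕ), m.degree = d → ∀ i, m i ≤ d := by
    intro m hmd i
    subst hmd
    rw [degree_eq_sum_univ]
    exact Finset.single_le_sum (f := fun j => m j) (fun _ _ => Nat.zero_le _) (mem_univ i)
  refine Subtype.ext (Finsupp.ext fun i => ?_)
  have h1 := congrFun h i
  simp only [Fin.mk.injEq] at h1
  rwa [Nat.min_eq_left (key a.1 a.2.2 i), Nat.min_eq_left (key b.1 b.2.2 i)] at h1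

noncomputable instance : Fintype (A n d) := Fintype.ofFinite _

/-- two antitone vectors in the same orbit are equal -/
lemma antitone_unique {m m' : Fin n →₀ ℕ} (hm : Antitone ⇑m) (hm' : Antitone ⇑m')
    (σ : Equiv.Perm (Fin n)) (h : Finsupp.mapDomain ⇑σ m = m') : m = m' := by
  have hfun : (⇑m ∘ ⇑σ.symm : Fin n → ℕ) = ⇑m' := by
    funext i
    have : Finsupp.mapDomain (⇑σ) m i = m' i := by rw [h]
    simpa [Finsupp.mapDomain_equiv_apply] using this
  have h1 : Monotone ((OrderDual.toDual ∘ ⇑m) ∘ ⇑σ.symm) := by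
    intro a b hab
    have : Antitone (⇑m ∘ ⇑σ.symm) := by rw [hfun]; exact hm'
    exact this hab
  have h2 : Monotone ((OrderDual.toDual ∘ ⇑m) ∘ ⇑(1 : Equiv.Perm (Fin n))) := by
    simpa using hm
  have := Tuple.unique_monotone (α := ℕᵒᵈ) h1 h2
  ext i
  have h4 := congrFun this i
  simp only [Function.comp_apply, Equiv.Perm.coe_one, id_eq] at h4
  have h3 := congrFun hfun i
  simp only [Function.comp_apply] at h3
  rw [← h3]
  exact congrArg OrderDual.ofDual h4.symm

/-- every exponent vector can be sorted to an antitone one by a permutation -/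
lemma exists_antitone_perm (m : Fin n →₀ ℕ) :
    ∃ σ : Equiv.Perm (Fin n), Antitone ⇑(Finsupp.mapDomain ⇑σ m) := by
  classical
  set τ := Tuple.sort (OrderDual.toDual ∘ ⇑m) with hτ
  refine ⟨τ⁻¹, ?_⟩
  have hmono := Tuple.monotone_sort (OrderDual.toDual ∘ ⇑m)
  have hcoe : ∀ i, Finsupp.mapDomain ⇑τ⁻¹ m i = m (τ i) := by
    intro i
    rw [Finsupp.mapDomain_equiv_apply]
    congr 1
  intro a b hab
  rw [hcoe a, hcoe b]
  exact hmono hab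

/-- the orbit of an exponent vector -/
noncomputable def orbit (m : Fin n →₀ ℕ) : Finset (Fin n →₀ ℕ) :=
  Finset.image (fun σ : Equiv.Perm (Fin n) => Finsupp.mapDomain ⇑σ m) Finset.univ

lemma self_mem_orbit (m : Fin n →₀ ℕ) : m ∈ orbit m := by
  refine Finset.mem_image.mpr ⟨1, mem_univ _, ?_⟩
  simp [Finsupp.mapDomain_id]

lemma orbit_map (σ : Equiv.Perm (Fin n)) (m : Fin n →₀ ℕ) :
    (orbit m).image (Finsupp.mapDomain ⇑σ) = orbit m := by
  apply Finset.Subset.antisymm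
  · intro x hx
    obtain ⟨y, hy, rfl⟩ := Finset.mem_image.mp hx
    obtain ⟨τ, _, rfl⟩ := Finset.mem_image.mp hy
    refine Finset.mem_image.mpr ⟨σ * τ, mem_univ _, ?_⟩
    rw [← Finsupp.mapDomain_comp]
    rfl
  · intro x hx
    obtain ⟨τ, _, rfl⟩ := Finset.mem_image.mp hx
    refine Finset.mem_image.mpr ⟨Finsupp.mapDomain ⇑(σ⁻¹ * τ) m,
      Finset.mem_image.mpr ⟨σ⁻¹ * τ, mem_univ _, rfl⟩, ?_⟩
    rw [← Finsupp.mapDomain_comp]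
    congr 1
    ext i
    simp [Equiv.Perm.coe_mul]

/-- the monomial symmetric polynomial -/
noncomputable def msym (m : Fin n →₀ ℕ) : MvPolynomial (Fin n) ℚ :=
  ∑ ν ∈ orbit m, monomial ν (1 : ℚ)

lemma coeff_msym (m ν : Fin n →₀ ℕ) :
    coeff ν (msym m) = if ν ∈ orbit m then 1 else 0 := by
  rw [msym, coeff_sum]
  simp only [coeff_monomial]
  by_cases h : ν ∈ orbit m
  · rw [Finset.sum_eq_single ν (fun b _ hb => if_neg hb) (fun h' => absurd h h'), if_pos rfl,
      if_pos h]
  · rw [if_neg h]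
    exact Finset.sum_eq_zero fun b hb => by
      rw [if_neg]; rintro rfl; exact h hb

lemma degree_of_mem_orbit {m ν : Fin n →₀ ℕ} (h : ν ∈ orbit m) : ν.degree = m.degree := by
  obtain ⟨σ, _, rfl⟩ := Finset.mem_image.mp h
  exact degree_mapDomain σ m

lemma msym_symmetric (m : Fin n →₀ ℕ) : (msym m).IsSymmetric := by
  classical
  intro σ
  rw [msym, map_sum]
  simp only [rename_monomial]
  conv_rhs => rw [← orbit_map σ m]
  rw [Finset.sum_image (fun x _ y _ h => Finsupp.mapDomain_injective σ.injective h)]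

lemma msym_mem (m : Fin n →₀ ℕ) (hd : m.degree = d) :
    msym m ∈ symHomogeneous n d := by
  constructor
  · apply Submodule.sum_mem
    intro ν hν
    rw [mem_homogeneousSubmodule]
    exact isHomogeneous_monomial 1 ((degree_of_mem_orbit hν).trans hd)
  · exact msym_symmetric m

/-- evaluation of coefficients at antitone vectors -/
noncomputable def Φ (n d : ℕ) : symHomogeneous n d →ₗ[ℚ] (A n d → ℚ) where
  toFun p μ := coeff μ.1 p.1
  map_add' p q := by ext μ; simp [coeff_add]
  map_smul' c p := by ext μ; simp

lemma coeff_perm {p : MvPolynomial (Fin n) ℚ} (hp : p.IsSymmetric)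
    (σ : Equiv.Perm (Fin n)) (m : Fin n →₀ ℕ) :
    coeff (Finsupp.mapDomain ⇑σ m) p = coeff m p := by
  conv_lhs => rw [← hp σ]
  exact coeff_rename_mapDomain ⇑σ σ.injective p m

lemma Φ_bijective (n d : ℕ) : Function.Bijective (Φ n d) := by
  constructor
  · rw [injective_iff_map_eq_zero]
    rintro ⟨p, hp⟩ h
    have hsym : p.IsSymmetric := hp.2
    have hhom : p.IsHomogeneous d := hp.1
    refine Subtype.ext (MvPolynomial.ext _ _ fun m => ?_)
    show coeff m p = coeff m (0 : MvPolynomial (Fin n) ℚ)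
    rw [coeff_zero]
    by_cases hd : m.degree = d
    · obtain ⟨σ, hσ⟩ := exists_antitone_perm m
      have hdeg : (Finsupp.mapDomain ⇑σ m).degree = d := (degree_mapDomain σ m).trans hd
      have := congrFun h ⟨Finsupp.mapDomain ⇑σ m, hσ, hdeg⟩
      rw [← coeff_perm hsym σ m]
      exact this
    · exact hhom.coeff_eq_zero hd
  · intro c
    classical
    set q : MvPolynomial (Fin n) ℚ := ∑ μ : A n d, c μ • msym μ.1 with hq
    have hqmem : q ∈ symHomogeneous n d :=
      Submodule.sum_mem _ fun μ _ => Submodule.smul_mem _ _ (msym_mem μ.1 μ.2.2)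
    refine ⟨⟨q, hqmem⟩, funext fun μ₀ => ?_⟩
    show coeff μ₀.1 q = c μ₀
    rw [hq, coeff_sum]
    simp only [coeff_smul, coeff_msym, smul_eq_mul]
    rw [Finset.sum_eq_single μ₀ ?_ (fun h => absurd (mem_univ μ₀) h)]
    · rw [if_pos (self_mem_orbit μ₀.1), mul_one]
    · intro μ _ hμ
      rw [if_neg, mul_zero]
      intro hmem
      obtain ⟨σ, _, hσ⟩ := Finset.mem_image.mp hmem
      exact hμ (Subtype.ext (antitone_unique μ.2.1 μ₀.2.1 σ hσ))

/-- weighted compositions: multiplicity vectors of partitions with parts ≤ n -/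
def W (n d : ℕ) : Type := {f : Fin n → ℕ // ∑ i : Fin n, ((i : ℕ) + 1) * f i = d}

lemma filter_le_eq_Iic (i : Fin n) :
    Finset.univ.filter (fun j : Fin n => (j : ℕ) ≤ (i : ℕ)) = Finset.Iic i := by
  ext j
  simp only [Finset.mem_filter, Finset.mem_univ, true_and, Finset.mem_Iic, Fin.le_def]

lemma sum_accumulate (f : Fin n → ℕ) :
    ∑ j : Fin n, Fin.accumulate n n f j = ∑ i : Fin n, ((i : ℕ) + 1) * f i := by
  simp only [Fin.accumulate_apply]
  simp only [Finset.sum_filter]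
  rw [Finset.sum_comm]
  refine Finset.sum_congr rfl fun i _ => ?_
  rw [← Finset.sum_filter, Finset.sum_const, filter_le_eq_Iic, Fin.card_Iic, smul_eq_mul]

lemma antitone_accumulate (f : Fin n → ℕ) : Antitone (Fin.accumulate n n f) := by
  intro a b hab
  simp only [Fin.accumulate_apply]
  apply Finset.sum_le_sum_of_subset
  intro i hi
  simp only [Finset.mem_filter, Finset.mem_univ, true_and] at hi ⊢
  exact le_trans hab hi

/-- the equivalence between antitone vectors and multiplicity vectors -/
noncomputable def equivAW (n d : ℕ) : A n d ≃ W n d where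
  toFun μ := ⟨Fin.invAccumulate n n ⇑μ.1, by
    rw [← sum_accumulate, Fin.accumulate_invAccumulate le_rfl μ.2.1]
    rw [← degree_eq_sum_univ]
    exact μ.2.2⟩
  invFun f := ⟨Finsupp.equivFunOnFinite.symm (Fin.accumulate n n f.1), by
      have hc : ⇑(Finsupp.equivFunOnFinite.symm (Fin.accumulate n n f.1))
          = Fin.accumulate n n f.1 := rfl
      constructor
      · rw [hc]; exact antitone_accumulate f.1
      · rw [degree_eq_sum_univ]
        simp only [hc]
        rw [sum_accumulate]
        exact f.2⟩
  left_inv μ := by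
    refine Subtype.ext ?_
    show Finsupp.equivFunOnFinite.symm (Fin.accumulate n n (Fin.invAccumulate n n ⇑μ.1)) = μ.1
    rw [Fin.accumulate_invAccumulate le_rfl μ.2.1]
    exact Finsupp.equivFunOnFinite_symm_coe μ.1
  right_inv f := by
    refine Subtype.ext ?_
    show Fin.invAccumulate n n ⇑(Finsupp.equivFunOnFinite.symm (Fin.accumulate n n f.1)) = f.1
    have hc : ⇑(Finsupp.equivFunOnFinite.symm (Fin.accumulate n n f.1))
        = Fin.accumulate n n f.1 := rfl
    rw [hc]
    apply Fin.accumulate_injective le_rfl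
    exact Fin.accumulate_invAccumulate le_rfl (antitone_accumulate f.1)

lemma sum_single_fin {a : ℕ} (h1 : 0 < a) (h2 : a ≤ n) (c : ℕ) :
    ∑ i : Fin n, ((i : ℕ) + 1) * (if (i : ℕ) + 1 = a then c else 0) = a * c := by
  have hlt : a - 1 < n := by omega
  rw [Finset.sum_eq_single (⟨a - 1, hlt⟩ : Fin n)]
  · simp only [Fin.val_mk]
    rw [if_pos (by omega)]
    congr 1
    omega
  · intro i _ hi
    rw [if_neg, mul_zero]
    intro h
    exact hi (Fin.ext (by simp only [Fin.val_mk]; omega))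
  · intro h
    exact absurd (mem_univ _) h

lemma count_sum_multiset (s : Multiset ℕ) (h1 : ∀ a ∈ s, 0 < a) (h2 : ∀ a ∈ s, a ≤ n) :
    ∑ i : Fin n, ((i : ℕ) + 1) * s.count ((i : ℕ) + 1) = s.sum := by
  induction s using Multiset.induction_on with
  | empty => simp
  | cons a t ih =>
    have ha1 : 0 < a := h1 a (Multiset.mem_cons_self a t)
    have ha2 : a ≤ n := h2 a (Multiset.mem_cons_self a t)
    simp only [Multiset.count_cons, Multiset.sum_cons]
    rw [← ih (fun b hb => h1 b (Multiset.mem_cons_of_mem hb))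
      (fun b hb => h2 b (Multiset.mem_cons_of_mem hb))]
    simp only [Nat.mul_add]
    rw [Finset.sum_add_distrib]
    rw [sum_single_fin ha1 ha2 1, mul_one]
    ring

/-- the equivalence between multiplicity vectors and partitions with parts `≤ n` -/
noncomputable def equivWP (n d : ℕ) :
    W n d ≃ {p : Nat.Partition d // ∀ i ∈ p.parts, i ≤ n} where
  toFun f := ⟨⟨∑ i : Fin n, Multiset.replicate (f.1 i) ((i : ℕ) + 1),
      by
        intro a ha
        rw [Multiset.mem_sum] at ha
        obtain ⟨i, _, hi⟩ := ha
        have := Multiset.eq_of_mem_replicate hi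
        omega,
      by
        rw [Multiset.sum_sum]
        simp only [Multiset.sum_replicate, smul_eq_mul]
        exact (Finset.sum_congr rfl fun i _ => mul_comm _ _).trans f.2⟩,
    by
      intro a ha
      simp only at ha
      rw [Multiset.mem_sum] at ha
      obtain ⟨i, _, hi⟩ := ha
      have := Multiset.eq_of_mem_replicate hi
      have := i.2
      omega⟩
  invFun p := ⟨fun i => p.1.parts.count ((i : ℕ) + 1), by
    rw [count_sum_multiset p.1.parts (fun a ha => p.1.parts_pos ha) p.2]
    exact p.1.parts_sum⟩
  left_inv f := by
    refine Subtype.ext (funext fun j => ?_)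
    simp only [Multiset.count_sum', Multiset.count_replicate]
    rw [Finset.sum_eq_single j]
    · rw [if_pos rfl]
    · intro i _ hi
      rw [if_neg]
      intro h
      exact hi (Fin.ext (by omega))
    · intro h
      exact absurd (mem_univ _) h
  right_inv p := by
    refine Subtype.ext (Nat.Partition.ext ?_)
    simp only
    refine (Multiset.ext.mpr fun a => ?_)
    rw [Multiset.count_sum']
    simp only [Multiset.count_replicate]
    by_cases ha : 0 < a ∧ a ≤ n
    · have hlt : a - 1 < n := by omega
      rw [Finset.sum_eq_single (⟨a - 1, hlt⟩ : Fin n)]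
      · simp only [Fin.val_mk]
        rw [if_pos (by omega)]
        congr 1
        omega
      · intro i _ hi
        rw [if_neg]
        intro h
        exact hi (Fin.ext (by simp only [Fin.val_mk]; omega))
      · intro h
        exact absurd (mem_univ _) h
    · have hnot : a ∉ p.1.parts := by
        intro hmem
        exact ha ⟨p.1.parts_pos hmem, p.2 a hmem⟩
      rw [Multiset.count_eq_zero_of_notMem hnot]
      refine Finset.sum_eq_zero fun i _ => ?_
      rw [if_neg]
      intro h
      have := i.2
      omega

/-- the combinatorial count -/
lemma card_A (n d : ℕ) :
    Nat.card (A n d) = Nat.card {p : Nat.Partition d // ∀ i ∈ p.parts, i ≤ n} :=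
  Nat.card_congr ((equivAW n d).trans (equivWP n d))

end SymHilbert

/-- Hilbert series of the symmetric polynomials: the dimension of the space of symmetric
polynomials in `n` variables, homogeneous of degree `d`, equals the number of partitions of `d`
into parts of size at most `n`. -/
theorem finrank_symHomogeneous (n d : ℕ) :
    Module.finrank ℚ (symHomogeneous n d) =
      Nat.card {p : Nat.Partition d // ∀ i ∈ p.parts, i ≤ n} := by
  rw [← SymHilbert.card_A n d]
  have e := LinearEquiv.ofBijective (SymHilbert.Φ n d) (SymHilbert.Φ_bijective n d)
  rw [e.finrank_eq]
  rw [Module.finrank_pi ℚ]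
  exact (Nat.card_eq_fintype_card).symm
end
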